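/- Fix ω ∈ ℂ with ω ∉ ℝ, let Γ = {m + nω : m, n ∈ ℤ}, and let p1, p2 ∈ ℂ with p1 − p2 ∉ Γ. Let P : ℂ∖Γ → ℂ be holomorphic and Γ-periodic such that z ↦ P(z) − z^{−2} extends holomorphically to a neighborhood of 0 (P has principal part exactly 1/z² at each lattice point). Then there exists a holomorphic, Γ-periodic function w̃ : ℂ∖((p1+Γ) ∪ (p2+Γ)) → ℂ with w̃′(z) = P(z − p1) − P(z − p2) for all z in its domain, and w̃ has a simple pole at p1 with residue −1 and a simple pole at p2 with residue +1. -/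

import Mathlib

open Complex Metric Set

/-- The lattice `Γ = {m + n·ω : m, n ∈ ℤ}` associated to `ω`. -/
def lattice (ω : ℂ) : Set ℂ := {z : ℂ | ∃ m n : ℤ, z = (m : ℂ) + (n : ℂ) * ω}

/-- The complement of `(p1 + Γ) ∪ (p2 + Γ)` in `ℂ`. -/
def latDom (ω p1 p2 : ℂ) : Set ℂ := {z : ℂ | z - p1 ∉ lattice ω ∧ z - p2 ∉ lattice ω}

noncomputable def Complex.abs : AbsoluteValue ℂ ℝ := NormedField.toAbsoluteValue ℂ

@[simp] lemma Complex.abs_apply' (z : ℂ) : Complex.abs z = ‖z‖ := rfl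

lemma Complex.dist_eq_abs' (z w : ℂ) : dist z w = Complex.abs (z - w) := Complex.dist_eq z w

namespace Stmt10
noncomputable section


/-- The lattice parametrization. -/
def L (ω : ℂ) (p : ℤ × ℤ) : ℂ := (p.1 : ℂ) + (p.2 : ℂ) * ω

lemma mem_lattice_iff {ω z : ℂ} : z ∈ lattice ω ↔ ∃ p : ℤ × ℤ, z = L ω p := by
  constructor
  · rintro ⟨m, n, rfl⟩; exact ⟨(m, n), rfl⟩
  · rintro ⟨⟨m, n⟩, rfl⟩; exact ⟨m, n, rfl⟩

lemma L_mem (ω : ℂ) (p : ℤ × ℤ) : L ω p ∈ lattice ω := mem_lattice_iff.2 ⟨p, rfl⟩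

lemma lat_add {ω a b : ℂ} (ha : a ∈ lattice ω) (hb : b ∈ lattice ω) : a + b ∈ lattice ω := by
  obtain ⟨m, n, rfl⟩ := ha; obtain ⟨m', n', rfl⟩ := hb
  exact ⟨m + m', n + n', by push_cast; ring⟩

lemma lat_neg {ω a : ℂ} (ha : a ∈ lattice ω) : -a ∈ lattice ω := by
  obtain ⟨m, n, rfl⟩ := ha; exact ⟨-m, -n, by push_cast; ring⟩

lemma lat_zero (ω : ℂ) : (0 : ℂ) ∈ lattice ω := ⟨0, 0, by norm_num⟩

lemma lat_one (ω : ℂ) : (1 : ℂ) ∈ lattice ω := ⟨1, 0, by norm_num⟩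

lemma lat_omega (ω : ℂ) : ω ∈ lattice ω := ⟨0, 1, by norm_num⟩

lemma lat_add_iff {ω a : ℂ} (ha : a ∈ lattice ω) {z : ℂ} :
    z + a ∈ lattice ω ↔ z ∈ lattice ω := by
  constructor
  · intro h; have := lat_add h (lat_neg ha); simpa using this
  · intro h; exact lat_add h ha

lemma lat_neg_iff {ω : ℂ} {z : ℂ} : -z ∈ lattice ω ↔ z ∈ lattice ω := by
  constructor
  · intro h; have := lat_neg h; simpa using this
  · exact lat_neg

/-- The comparison constant. -/
def K (ω : ℂ) : ℝ := (1 + Complex.abs ω + |ω.im|) / |ω.im|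

lemma K_pos {ω : ℂ} (hω : ω.im ≠ 0) : 0 < K ω := by
  have h : 0 < |ω.im| := abs_pos.2 hω
  have : (0:ℝ) < 1 + Complex.abs ω + |ω.im| := by positivity
  exact div_pos this h

lemma max_le_K_mul {ω : ℂ} (hω : ω.im ≠ 0) (p : ℤ × ℤ) :
    ((max p.1.natAbs p.2.natAbs : ℕ) : ℝ) ≤ K ω * Complex.abs (L ω p) := by
  have him : 0 < |ω.im| := abs_pos.2 hω
  have hLim : (L ω p).im = (p.2 : ℝ) * ω.im := by
    simp [L, add_im, mul_im]
  have h2 : |(p.2 : ℝ)| * |ω.im| ≤ Complex.abs (L ω p) := by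
    rw [← abs_mul, ← hLim]
    exact Complex.abs_im_le_norm _
  have h2' : |(p.2 : ℝ)| ≤ Complex.abs (L ω p) / |ω.im| := by
    rw [le_div_iff₀ him]; exact h2
  have h1 : |(p.1 : ℝ)| ≤ Complex.abs (L ω p) + |(p.2 : ℝ)| * Complex.abs ω := by
    have : (p.1 : ℂ) = L ω p - (p.2 : ℂ) * ω := by simp [L]
    calc |(p.1 : ℝ)| = Complex.abs ((p.1 : ℂ)) := by simp
      _ = Complex.abs (L ω p - (p.2 : ℂ) * ω) := by rw [← this]
      _ ≤ Complex.abs (L ω p) + Complex.abs ((p.2 : ℂ) * ω) := by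
          exact (Complex.abs.sub_le_add _ _)
      _ = Complex.abs (L ω p) + |(p.2 : ℝ)| * Complex.abs ω := by
          rw [map_mul]; simp
  have hA : 0 ≤ Complex.abs (L ω p) := Complex.abs.nonneg _
  have hcast : ((max p.1.natAbs p.2.natAbs : ℕ) : ℝ) = max |(p.1 : ℝ)| |(p.2 : ℝ)| := by
    push_cast [Nat.cast_natAbs]
    norm_num
  rw [hcast, max_le_iff]
  constructor
  · calc |(p.1 : ℝ)| ≤ Complex.abs (L ω p) + |(p.2 : ℝ)| * Complex.abs ω := h1
      _ ≤ Complex.abs (L ω p) + (Complex.abs (L ω p) / |ω.im|) * Complex.abs ω := by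
          have := mul_le_mul_of_nonneg_right h2' (Complex.abs.nonneg ω)
          linarith
      _ = Complex.abs (L ω p) * ((|ω.im| + Complex.abs ω) / |ω.im|) := by
          field_simp
      _ ≤ Complex.abs (L ω p) * K ω := by
          apply mul_le_mul_of_nonneg_left _ hA
          unfold K
          rw [div_le_div_iff₀ him him]
          have := Complex.abs.nonneg ω
          nlinarith [abs_nonneg ω.im]
      _ = K ω * Complex.abs (L ω p) := mul_comm _ _
  · calc |(p.2 : ℝ)| ≤ Complex.abs (L ω p) / |ω.im| := h2'
      _ = Complex.abs (L ω p) * (1 / |ω.im|) := by ring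
      _ ≤ Complex.abs (L ω p) * K ω := by
          apply mul_le_mul_of_nonneg_left _ hA
          unfold K
          rw [div_le_div_iff₀ him him]
          have := Complex.abs.nonneg ω
          nlinarith [abs_nonneg ω.im]
      _ = K ω * Complex.abs (L ω p) := mul_comm _ _

lemma L_eq_zero_iff {ω : ℂ} (hω : ω.im ≠ 0) {p : ℤ × ℤ} : L ω p = 0 ↔ p = 0 := by
  constructor
  · intro h
    have h2 := max_le_K_mul hω p
    rw [h] at h2
    simp only [map_zero, mul_zero] at h2
    have : max p.1.natAbs p.2.natAbs = 0 := by exact_mod_cast le_antisymm h2 (by positivity)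
    have h1 : p.1.natAbs = 0 := by omega
    have hh2 : p.2.natAbs = 0 := by omega
    have : p.1 = 0 := Int.natAbs_eq_zero.1 h1
    have : p.2 = 0 := Int.natAbs_eq_zero.1 hh2
    cases p; simp_all
  · rintro rfl; simp [L]

lemma L_add (ω : ℂ) (p q : ℤ × ℤ) : L ω (p + q) = L ω p + L ω q := by
  simp only [L, Prod.fst_add, Prod.snd_add]; push_cast; ring

lemma L_sub (ω : ℂ) (p q : ℤ × ℤ) : L ω (p - q) = L ω p - L ω q := by
  simp only [L, Prod.fst_sub, Prod.snd_sub]; push_cast; ring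

lemma L_neg (ω : ℂ) (p : ℤ × ℤ) : L ω (-p) = - L ω p := by
  simp only [L, Prod.fst_neg, Prod.snd_neg]; push_cast; ring

lemma L_inj {ω : ℂ} (hω : ω.im ≠ 0) : Function.Injective (L ω) := by
  intro p q h
  have : L ω (p - q) = 0 := by rw [L_sub, h, sub_self]
  have := (L_eq_zero_iff hω).1 this
  exact sub_eq_zero.1 this

/-- The summable majorant. -/
def u (p : ℤ × ℤ) : ℝ := ((max p.1.natAbs p.2.natAbs : ℕ) : ℝ)⁻¹ ^ 3

lemma u_nonneg (p : ℤ × ℤ) : 0 ≤ u p := by unfold u; positivity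

lemma summable_u : Summable u := by
  have h := EisensteinSeries.summable_one_div_norm_rpow (by norm_num : (2:ℝ) < 3)
  rw [← Equiv.summable_iff (finTwoArrowEquiv ℤ)]
  apply h.congr
  intro x
  have hux : u ((finTwoArrowEquiv ℤ) x) = ((max (x 0).natAbs (x 1).natAbs : ℕ) : ℝ)⁻¹ ^ 3 := rfl
  show ‖x‖ ^ (-(3:ℝ)) = u ((finTwoArrowEquiv ℤ) x)
  rw [hux, EisensteinSeries.norm_eq_max_natAbs]
  rcases Nat.eq_zero_or_pos (max (x 0).natAbs (x 1).natAbs) with h0 | h0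
  · rw [h0]; norm_num
  · have ht : (0:ℝ) < ((max (x 0).natAbs (x 1).natAbs : ℕ) : ℝ) := by exact_mod_cast h0
    rw [show (-(3:ℝ)) = -((3:ℕ):ℝ) by norm_num, Real.rpow_neg ht.le, Real.rpow_natCast, inv_pow]

lemma inv_cube_le {ω : ℂ} (hω : ω.im ≠ 0) {p : ℤ × ℤ} {N : ℝ} (hN : 0 < N)
    (hp : N ≤ ((max p.1.natAbs p.2.natAbs : ℕ) : ℝ)) :
    (Complex.abs (L ω p))⁻¹ ^ 3 ≤ K ω ^ 3 * u p := by
  set M : ℝ := ((max p.1.natAbs p.2.natAbs : ℕ) : ℝ) with hM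
  have hM0 : 0 < M := lt_of_lt_of_le hN hp
  have hKp := K_pos hω
  have hle := max_le_K_mul hω p
  have hL0 : 0 < Complex.abs (L ω p) := by
    by_contra h
    push_neg at h
    have : Complex.abs (L ω p) = 0 := le_antisymm h (Complex.abs.nonneg _)
    rw [this, mul_zero] at hle
    linarith
  have key : (Complex.abs (L ω p))⁻¹ ≤ K ω * M⁻¹ := by
    have h1 : M / K ω ≤ Complex.abs (L ω p) := by
      rw [div_le_iff₀ hKp]
      linarith [hle]
    have h2 : (Complex.abs (L ω p))⁻¹ ≤ (M / K ω)⁻¹ := by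
      apply inv_anti₀ (by positivity) h1
    calc (Complex.abs (L ω p))⁻¹ ≤ (M / K ω)⁻¹ := h2
      _ = K ω * M⁻¹ := by field_simp
  calc (Complex.abs (L ω p))⁻¹ ^ 3 ≤ (K ω * M⁻¹) ^ 3 := by
        apply pow_le_pow_left₀ (by positivity) key
    _ = K ω ^ 3 * u p := by rw [mul_pow]; rfl




/-- Sets with bounded index are finite. -/
lemma finite_max_lt (N : ℝ) : {p : ℤ × ℤ | ((max p.1.natAbs p.2.natAbs : ℕ) : ℝ) < N}.Finite := by
  set M : ℕ := ⌈N⌉₊ with hM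
  apply Set.Finite.subset (Set.finite_Icc ((-(M:ℤ), -(M:ℤ))) ((M:ℤ), (M:ℤ)))
  intro p hp
  simp only [Set.mem_setOf_eq] at hp
  have h1 : ((max p.1.natAbs p.2.natAbs : ℕ) : ℝ) < M := lt_of_lt_of_le hp (Nat.le_ceil N)
  have h2 : max p.1.natAbs p.2.natAbs ≤ M := by exact_mod_cast h1.le
  have hp1 : p.1.natAbs ≤ M := le_trans (le_max_left _ _) h2
  have hp2 : p.2.natAbs ≤ M := le_trans (le_max_right _ _) h2
  refine ⟨⟨?_, ?_⟩, ⟨?_, ?_⟩⟩ <;> simp only [] <;> omega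

/-- Finitely many lattice points in any ball. -/
lemma finite_near {ω : ℂ} (hω : ω.im ≠ 0) (w : ℂ) (R : ℝ) :
    {p : ℤ × ℤ | Complex.abs (L ω p - w) ≤ R}.Finite := by
  apply Set.Finite.subset (finite_max_lt (K ω * (R + Complex.abs w) + 1))
  intro p hp
  simp only [Set.mem_setOf_eq] at hp ⊢
  have h1 := max_le_K_mul hω p
  have h2 : Complex.abs (L ω p) ≤ R + Complex.abs w := by
    calc Complex.abs (L ω p) = Complex.abs ((L ω p - w) + w) := by ring_nf
      _ ≤ Complex.abs (L ω p - w) + Complex.abs w := Complex.abs.add_le _ _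
      _ ≤ R + Complex.abs w := by linarith
  have hK := K_pos hω
  nlinarith

/-- Key isolation lemma: near any point `q`, all points except possibly `q` itself
avoid the two translated lattices. -/
lemma isolate {ω : ℂ} (hω : ω.im ≠ 0) (t1 t2 q : ℂ) :
    ∃ ε > 0, ∀ z ∈ ball q ε, z ≠ q → z - t1 ∉ lattice ω ∧ z - t2 ∉ lattice ω := by
  classical
  have hfin : ({z : ℂ | (z - t1 ∈ lattice ω ∨ z - t2 ∈ lattice ω) ∧ Complex.abs (z - q) ≤ 1}
      \ {q}).Finite := by
    have h1 : {z : ℂ | z - t1 ∈ lattice ω ∧ Complex.abs (z - q) ≤ 1} ⊆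
        (fun p : ℤ × ℤ => t1 + L ω p) '' {p | Complex.abs (L ω p - (q - t1)) ≤ 1} := by
      rintro z ⟨hz1, hz2⟩
      obtain ⟨p, hp⟩ := mem_lattice_iff.1 hz1
      refine ⟨p, ?_, by show t1 + L ω p = z; rw [← hp]; ring⟩
      simp only [Set.mem_setOf_eq]
      rw [← hp]
      convert hz2 using 2
      ring
    have h2 : {z : ℂ | z - t2 ∈ lattice ω ∧ Complex.abs (z - q) ≤ 1} ⊆
        (fun p : ℤ × ℤ => t2 + L ω p) '' {p | Complex.abs (L ω p - (q - t2)) ≤ 1} := by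
      rintro z ⟨hz1, hz2⟩
      obtain ⟨p, hp⟩ := mem_lattice_iff.1 hz1
      refine ⟨p, ?_, by show t2 + L ω p = z; rw [← hp]; ring⟩
      simp only [Set.mem_setOf_eq]
      rw [← hp]
      convert hz2 using 2
      ring
    apply Set.Finite.subset (Set.Finite.union
      (((finite_near hω (q - t1) 1).image _))
      (((finite_near hω (q - t2) 1).image _)))
    rintro z ⟨⟨hor, hd⟩, _⟩
    rcases hor with h | h
    · exact Or.inl (h1 ⟨h, hd⟩)
    · exact Or.inr (h2 ⟨h, hd⟩)
  set T := hfin.toFinset with hT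
  by_cases hne : T.Nonempty
  · set δ := min 1 (T.inf' hne (fun z => Complex.abs (z - q))) with hδ
    have hδpos : 0 < δ := by
      apply lt_min one_pos
      rw [Finset.lt_inf'_iff]
      intro z hz
      rw [hT, Set.Finite.mem_toFinset] at hz
      have : z ≠ q := hz.2
      have : z - q ≠ 0 := sub_ne_zero.2 this
      exact Complex.abs.pos this
    refine ⟨δ, hδpos, ?_⟩
    intro z hz hzq
    by_contra hcon
    have hmem : z ∈ T := by
      rw [hT, Set.Finite.mem_toFinset]
      refine ⟨⟨?_, ?_⟩, hzq⟩
      · tauto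
      · have := mem_ball.1 hz
        rw [Complex.dist_eq_abs'] at this
        have hδ1 : δ ≤ 1 := min_le_left _ _
        linarith
    have : δ ≤ Complex.abs (z - q) := by
      calc δ ≤ T.inf' hne (fun z => Complex.abs (z - q)) := min_le_right _ _
        _ ≤ Complex.abs (z - q) := Finset.inf'_le _ hmem
    have := mem_ball.1 hz
    rw [Complex.dist_eq_abs'] at this
    linarith
  · refine ⟨1, one_pos, ?_⟩
    intro z hz hzq
    by_contra hcon
    apply hne
    refine ⟨z, ?_⟩
    rw [hT, Set.Finite.mem_toFinset]
    refine ⟨⟨by tauto, ?_⟩, hzq⟩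
    have := mem_ball.1 hz
    rw [Complex.dist_eq_abs'] at this
    linarith

/-- Constancy of functions with zero derivative on open preconnected sets. -/
lemma const_of_deriv_zero {U : Set ℂ} (hU : IsOpen U) (hUc : IsPreconnected U) {f : ℂ → ℂ}
    (hf : ∀ z ∈ U, HasDerivAt f 0 z) {a b : ℂ} (ha : a ∈ U) (hb : b ∈ U) : f a = f b := by
  have hloc : ∀ z ∈ U, ∃ r > 0, ball z r ⊆ U ∧ ∀ x ∈ ball z r, f x = f z := by
    intro z hz
    obtain ⟨r, hr, hball⟩ := Metric.isOpen_iff.1 hU z hz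
    refine ⟨r, hr, hball, ?_⟩
    intro x hx
    have hconv : Convex ℝ (ball z r) := convex_ball z r
    apply hconv.is_const_of_fderivWithin_eq_zero
      (fun y hy => ((hf y (hball hy)).differentiableAt.differentiableWithinAt)) _ hx
      (mem_ball_self hr)
    intro y hy
    have h1 : fderivWithin ℂ f (ball z r) y = fderiv ℂ f y :=
      fderivWithin_eq_fderiv (isOpen_ball.uniqueDiffOn y hy)
        (hf y (hball hy)).differentiableAt
    rw [h1]
    have h2 := (hf y (hball hy)).hasFDerivAt.fderiv
    rw [h2]
    ext v
    simp
  by_contra hne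
  set s := {z ∈ U | f z = f a} with hs
  set t := {z ∈ U | f z ≠ f a} with ht
  have hso : IsOpen s := by
    rw [Metric.isOpen_iff]
    rintro z ⟨hzU, hzf⟩
    obtain ⟨r, hr, hbU, hconst⟩ := hloc z hzU
    exact ⟨r, hr, fun x hx => ⟨hbU hx, by rw [hconst x hx, hzf]⟩⟩
  have hto : IsOpen t := by
    rw [Metric.isOpen_iff]
    rintro z ⟨hzU, hzf⟩
    obtain ⟨r, hr, hbU, hconst⟩ := hloc z hzU
    exact ⟨r, hr, fun x hx => ⟨hbU hx, by rw [hconst x hx]; exact hzf⟩⟩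
  obtain ⟨x, hx⟩ := hUc s t hso hto
    (fun z hz => by by_cases h : f z = f a; exacts [Or.inl ⟨hz, h⟩, Or.inr ⟨hz, h⟩])
    ⟨a, ha, ha, rfl⟩ ⟨b, hb, hb, fun h => hne h.symm⟩
  exact hx.2.2.2 hx.2.1.2

/-- Gluing local holomorphic extensions across a discrete singular set. -/
lemma glue {S : Set ℂ} (hSc : IsOpen Sᶜ) {f : ℂ → ℂ} (hf : DifferentiableOn ℂ f Sᶜ)
    (hloc : ∀ q ∈ S, ∃ ε > 0, (∀ z ∈ ball q ε, z ≠ q → z ∉ S) ∧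
      ∃ h : ℂ → ℂ, DifferentiableOn ℂ h (ball q ε) ∧ ∀ z ∈ ball q ε, z ≠ q → f z = h z) :
    ∃ F : ℂ → ℂ, Differentiable ℂ F ∧ ∀ z ∉ S, F z = f z := by
  classical
  have hex : ∀ q : ℂ, ∃ h : ℂ → ℂ, q ∈ S → ∃ ε > 0, (∀ z ∈ ball q ε, z ≠ q → z ∉ S) ∧
      DifferentiableOn ℂ h (ball q ε) ∧ ∀ z ∈ ball q ε, z ≠ q → f z = h z := by
    intro q
    by_cases hq : q ∈ S
    · obtain ⟨ε, hε, hiso, h, hh1, hh2⟩ := hloc q hq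
      exact ⟨h, fun _ => ⟨ε, hε, hiso, hh1, hh2⟩⟩
    · exact ⟨f, fun h => absurd h hq⟩
  choose H hH using hex
  refine ⟨fun z => if z ∈ S then H z z else f z, ?_, ?_⟩
  · intro z₀
    by_cases hz₀ : z₀ ∈ S
    · obtain ⟨ε, hε, hiso, hdiff, heq⟩ := hH z₀ hz₀
      have hEq : Set.EqOn (fun z => if z ∈ S then H z z else f z) (H z₀) (ball z₀ ε) := by
        intro z hz
        by_cases hzS : z ∈ S
        · have : z = z₀ := by
            by_contra hne
            exact (hiso z hz hne) hzS
          subst this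
          simp [hzS]
        · simp only [hzS, if_false]
          have hne : z ≠ z₀ := fun h => hzS (h ▸ hz₀)
          exact heq z hz hne
      have : DifferentiableAt ℂ (H z₀) z₀ :=
        (hdiff.differentiableAt (isOpen_ball.mem_nhds (mem_ball_self hε)))
      apply this.congr_of_eventuallyEq
      filter_upwards [isOpen_ball.mem_nhds (mem_ball_self hε)] with z hz
      exact hEq hz
    · have hmem : Sᶜ ∈ nhds z₀ := hSc.mem_nhds hz₀
      have : DifferentiableAt ℂ f z₀ := hf.differentiableAt hmem
      apply this.congr_of_eventuallyEq
      filter_upwards [hmem] with z hz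
      simp only [Set.mem_compl_iff] at hz
      simp [hz]
  · intro z hz
    simp [hz]

/-- Periodization: from the two generators to the whole lattice, for entire functions. -/
lemma per_lattice {ω : ℂ} {F : ℂ → ℂ} (h1 : ∀ z, F (z + 1) = F z)
    (hw : ∀ z, F (z + ω) = F z) : ∀ (z : ℂ) (m n : ℤ), F (z + ((m : ℂ) + (n : ℂ) * ω)) = F z := by
  have h1' : ∀ z : ℂ, F (z - 1) = F z := by
    intro z
    have := h1 (z - 1)
    rw [sub_add_cancel] at this
    rw [this]
  have hw' : ∀ z : ℂ, F (z - ω) = F z := by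
    intro z
    have := hw (z - ω)
    rw [sub_add_cancel] at this
    rw [this]
  have hm : ∀ (m : ℤ) (z : ℂ), F (z + (m : ℂ)) = F z := by
    intro m
    induction m using Int.induction_on with
    | zero => simp
    | succ k ih =>
        intro z
        have ih' : ∀ w : ℂ, F (w + (k : ℂ)) = F w := by intro w; have := ih w; push_cast at this ⊢; exact this
        push_cast
        rw [show z + ((k : ℂ) + 1) = (z + (k:ℂ)) + 1 by ring, h1, ih']
    | pred k ih =>
        intro z
        have ih' : ∀ w : ℂ, F (w + -(k : ℂ)) = F w := by intro w; have := ih w; push_cast at this ⊢; exact this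
        push_cast
        rw [show z + (-(k : ℂ) - 1) = (z + -(k:ℂ)) - 1 by ring, h1', ih']
  have hn : ∀ (n : ℤ) (z : ℂ), F (z + (n : ℂ) * ω) = F z := by
    intro n
    induction n using Int.induction_on with
    | zero => simp
    | succ k ih =>
        intro z
        have ih' : ∀ w : ℂ, F (w + (k : ℂ) * ω) = F w := by intro w; have := ih w; push_cast at this ⊢; exact this
        push_cast
        rw [show z + ((k : ℂ) + 1) * ω = (z + (k:ℂ) * ω) + ω by ring, hw, ih']
    | pred k ih =>
        intro z
        have ih' : ∀ w : ℂ, F (w + -((k : ℂ) * ω)) = F w := by intro w; have := ih w; push_cast at this ⊢; ring_nf at this ⊢; exact this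
        push_cast
        rw [show z + (-(k : ℂ) - 1) * ω = (z + -((k:ℂ) * ω)) - ω by ring, hw', ih']
  intro z m n
  rw [show z + ((m : ℂ) + (n : ℂ) * ω) = (z + (n : ℂ) * ω) + (m : ℂ) by ring, hm, hn]

/-- Every point is a lattice translate of a point of the fundamental domain. -/
lemma exists_translate {ω : ℂ} (hω : ω.im ≠ 0) (z : ℂ) :
    ∃ m n : ℤ, z - ((m : ℂ) + (n : ℂ) * ω) ∈
      (fun t : ℝ × ℝ => (t.1 : ℂ) + (t.2 : ℂ) * ω) '' (Icc (0:ℝ) 1 ×ˢ Icc (0:ℝ) 1) := by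
  set b : ℝ := z.im / ω.im with hb
  set a : ℝ := z.re - b * ω.re with ha
  refine ⟨⌊a⌋, ⌊b⌋, ⟨(a - ⌊a⌋, b - ⌊b⌋), ⟨⟨?_, ?_⟩, ⟨?_, ?_⟩⟩, ?_⟩⟩
  · exact sub_nonneg.2 (Int.floor_le a)
  · show a - ⌊a⌋ ≤ 1
    linarith [Int.lt_floor_add_one a]
  · exact sub_nonneg.2 (Int.floor_le b)
  · show b - ⌊b⌋ ≤ 1
    linarith [Int.lt_floor_add_one b]
  · have hz : z = (a : ℂ) + (b : ℂ) * ω := by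
      apply Complex.ext
      · simp [ha]
      · simp [hb]
        field_simp
    simp only
    rw [hz]
    push_cast
    ring




/-- The summand of the `ζ`-difference series. -/
def fterm (ω p1 p2 : ℂ) (p : ℤ × ℤ) (z : ℂ) : ℂ :=
  (z - p2 - L ω p)⁻¹ - (z - p1 - L ω p)⁻¹ - (p2 - p1) / (L ω p) ^ 2

/-- The summand of the `℘`-difference series. -/
def gterm (ω p1 p2 : ℂ) (p : ℤ × ℤ) (z : ℂ) : ℂ :=
  ((z - p1 - L ω p) ^ 2)⁻¹ - ((z - p2 - L ω p) ^ 2)⁻¹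

lemma hasDerivAt_fterm {ω p1 p2 : ℂ} (p : ℤ × ℤ) {z : ℂ}
    (h1 : z - p1 - L ω p ≠ 0) (h2 : z - p2 - L ω p ≠ 0) :
    HasDerivAt (fterm ω p1 p2 p) (gterm ω p1 p2 p z) z := by
  have hz2 : z - (p2 + L ω p) ≠ 0 := by rw [← sub_sub]; exact h2
  have hz1 : z - (p1 + L ω p) ≠ 0 := by rw [← sub_sub]; exact h1
  have H2 : HasDerivAt (fun w => (w - (p2 + L ω p))⁻¹) (-1 / (z - (p2 + L ω p)) ^ 2) z := by
    exact ((hasDerivAt_id' (x := z)).sub_const (p2 + L ω p)).inv hz2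
  have H1 : HasDerivAt (fun w => (w - (p1 + L ω p))⁻¹) (-1 / (z - (p1 + L ω p)) ^ 2) z := by
    exact ((hasDerivAt_id' (x := z)).sub_const (p1 + L ω p)).inv hz1
  have H := (H2.fun_sub H1).sub_const ((p2 - p1) / (L ω p) ^ 2)
  have hfun : (fun w => (w - (p2 + L ω p))⁻¹ - (w - (p1 + L ω p))⁻¹ - (p2 - p1) / (L ω p) ^ 2)
      = fterm ω p1 p2 p := by
    funext w
    simp only [fterm, sub_sub]
  rw [hfun] at H
  refine H.congr_deriv ?_
  simp only [gterm, sub_sub]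
  rw [div_eq_mul_inv, div_eq_mul_inv]
  ring

/-- Main local-uniform machinery for sums over the lattice. -/
lemma machinery (Fm : ℤ × ℤ → ℂ → ℂ) (z₀ : ℂ) (r : ℝ)
    (hd : ∀ p, DifferentiableOn ℂ (Fm p) (ball z₀ (2 * r)))
    {C N : ℝ}
    (hC : ∀ p : ℤ × ℤ, N ≤ ((max p.1.natAbs p.2.natAbs : ℕ) : ℝ) →
      ∀ w ∈ ball z₀ r, ‖Fm p w‖ ≤ C * u p) :
    (∀ z ∈ ball z₀ r, Summable (fun p => Fm p z)) ∧
    DifferentiableOn ℂ (fun w => ∑' p, Fm p w) (ball z₀ r) ∧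
    (∀ z ∈ ball z₀ r, HasSum (fun p => deriv (Fm p) z) (deriv (fun w => ∑' p, Fm p w) z)) := by
  classical
  rcases le_or_gt r 0 with hr | hr
  · have hempty : ball z₀ r = ∅ := ball_eq_empty.2 hr
    rw [hempty]
    refine ⟨fun z hz => absurd hz (by simp), ?_, fun z hz => absurd hz (by simp)⟩
    intro z hz
    exact absurd hz (by simp)
  have hsub : closedBall z₀ r ⊆ ball z₀ (2 * r) := by
    intro x hx
    rw [mem_closedBall] at hx
    rw [mem_ball]
    linarith
  have hbound : ∀ p, ∃ M, ∀ w ∈ closedBall z₀ r, ‖Fm p w‖ ≤ M := fun p =>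
    (isCompact_closedBall _ _).exists_bound_of_continuousOn ((hd p).continuousOn.mono hsub)
  choose Mb hMb using hbound
  set cond : ℤ × ℤ → Prop := fun p => ((max p.1.natAbs p.2.natAbs : ℕ) : ℝ) < N with hcond
  set u' : ℤ × ℤ → ℝ :=
    fun p => (if cond p then |Mb p| - C * u p else 0) + C * u p with hu'
  have hsum : Summable u' := by
    apply Summable.add _ (summable_u.mul_left C)
    apply summable_of_ne_finset_zero (s := (finite_max_lt N).toFinset)
    intro p hp
    rw [Set.Finite.mem_toFinset] at hp
    simp only [Set.mem_setOf_eq] at hp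
    have : ¬ cond p := hp
    rw [if_neg this]
  have hF_le : ∀ (p : ℤ × ℤ) (w : ℂ), w ∈ ball z₀ r → ‖Fm p w‖ ≤ u' p := by
    intro p w hw
    by_cases h : cond p
    · have : u' p = |Mb p| := by simp [hu', h]
      rw [this]
      exact le_trans (hMb p w (ball_subset_closedBall hw)) (le_abs_self _)
    · have : u' p = C * u p := by simp [hu', h]
      rw [this]
      exact hC p (not_lt.1 h) w hw
  have hd' : ∀ p, DifferentiableOn ℂ (Fm p) (ball z₀ r) :=
    fun p => (hd p).mono (ball_subset_ball (by linarith))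
  refine ⟨?_, ?_, ?_⟩
  · intro z hz
    exact Summable.of_norm_bounded hsum (fun p => hF_le p z hz)
  · exact differentiableOn_tsum_of_summable_norm hsum hd' isOpen_ball hF_le
  · intro z hz
    exact hasSum_deriv_of_summable_norm hsum hd' isOpen_ball hF_le hz

set_option maxHeartbeats 1000000 in
/-- Uniform bound on the series terms on any ball. -/
lemma terms_bound (ω p1 p2 : ℂ) (hω : ω.im ≠ 0) (z₀ : ℂ) (r : ℝ) :
    ∃ C N : ℝ, 0 ≤ C ∧ 0 < N ∧ ∀ p : ℤ × ℤ, N ≤ ((max p.1.natAbs p.2.natAbs : ℕ) : ℝ) →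
      ∀ w ∈ ball z₀ r, L ω p ≠ 0 ∧ (w - p1 - L ω p ≠ 0 ∧ w - p2 - L ω p ≠ 0) ∧
        ‖fterm ω p1 p2 p w‖ ≤ C * u p ∧ ‖gterm ω p1 p2 p w‖ ≤ C * u p := by
  have hK := K_pos hω
  set ρ : ℝ := |r| + Complex.abs (z₀ - p1) + Complex.abs (z₀ - p2) + 1 with hρ
  have hρ1 : 1 ≤ ρ := by
    have := abs_nonneg r
    have := Complex.abs.nonneg (z₀ - p1)
    have := Complex.abs.nonneg (z₀ - p2)
    linarith
  have hρ0 : 0 < ρ := by linarith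
  refine ⟨(4 * Complex.abs (p2 - p1) * (2 * ρ + ρ ^ 2) + 48 * Complex.abs (p1 - p2)) * K ω ^ 3,
    K ω * (2 * ρ + 2), by positivity, by positivity, ?_⟩
  intro p hp w hw
  set lam := L ω p with hlam
  have hmax := max_le_K_mul hω p
  have hlam_lb : 2 * ρ + 2 ≤ Complex.abs lam := by
    by_contra hcon
    push_neg at hcon
    have : K ω * Complex.abs lam < K ω * (2 * ρ + 2) := by
      apply mul_lt_mul_of_pos_left hcon hK
    linarith
  have hlam2 : (2:ℝ) ≤ Complex.abs lam := by linarith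
  have hlam0 : lam ≠ 0 := by
    intro h
    rw [h] at hlam2
    simp at hlam2
    linarith
  -- distances from w to p1, p2
  have hwp1 : Complex.abs (w - p1) ≤ ρ := by
    calc Complex.abs (w - p1) = Complex.abs ((w - z₀) + (z₀ - p1)) := by ring_nf
      _ ≤ Complex.abs (w - z₀) + Complex.abs (z₀ - p1) := Complex.abs.add_le _ _
      _ ≤ ρ := by
          have := mem_ball.1 hw
          rw [Complex.dist_eq_abs'] at this
          have hr' : r ≤ |r| := le_abs_self r
          have := Complex.abs.nonneg (z₀ - p2)
          linarith
  have hwp2 : Complex.abs (w - p2) ≤ ρ := by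
    calc Complex.abs (w - p2) = Complex.abs ((w - z₀) + (z₀ - p2)) := by ring_nf
      _ ≤ Complex.abs (w - z₀) + Complex.abs (z₀ - p2) := Complex.abs.add_le _ _
      _ ≤ ρ := by
          have := mem_ball.1 hw
          rw [Complex.dist_eq_abs'] at this
          have hr' : r ≤ |r| := le_abs_self r
          have := Complex.abs.nonneg (z₀ - p1)
          linarith
  set a := w - p2 with hA'
  set b := w - p1 with hB'
  set A := w - p2 - lam with hAdef
  set B := w - p1 - lam with hBdef
  have hAeq : A = a - lam := rfl
  have hBeq : B = b - lam := rfl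
  have hAlb : Complex.abs lam / 2 ≤ Complex.abs A := by
    have t : Complex.abs lam ≤ Complex.abs a + Complex.abs (a - lam) := by
      have h := Complex.abs.sub_le_add a (a - lam)
      simpa using h
    rw [hAeq]
    linarith
  have hBlb : Complex.abs lam / 2 ≤ Complex.abs B := by
    have t : Complex.abs lam ≤ Complex.abs b + Complex.abs (b - lam) := by
      have h := Complex.abs.sub_le_add b (b - lam)
      simpa using h
    rw [hBeq]
    linarith
  have hApos : (0:ℝ) < Complex.abs A := by linarith
  have hBpos : (0:ℝ) < Complex.abs B := by linarith
  have hA0 : A ≠ 0 := by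
    intro h; rw [h] at hApos; simp at hApos
  have hB0 : B ≠ 0 := by
    intro h; rw [h] at hBpos; simp at hBpos
  have hinv3 := inv_cube_le hω (by positivity : (0:ℝ) < K ω * (2*ρ+2)) hp
  rw [← hlam] at hinv3
  refine ⟨hlam0, ⟨hB0, hA0⟩, ?_, ?_⟩
  · -- bound for fterm
    have hid : fterm ω p1 p2 p w = (p2 - p1) * (lam * (a + b) - a * b) / (lam ^ 2 * (A * B)) := by
      rw [fterm, ← hlam, ← hAdef, ← hBdef]
      field_simp
      ring
    rw [hid]
    have hnum : Complex.abs (lam * (a + b) - a * b) ≤ Complex.abs lam * (2 * ρ + ρ ^ 2) := by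
      calc Complex.abs (lam * (a + b) - a * b)
          ≤ Complex.abs (lam * (a + b)) + Complex.abs (a * b) := Complex.abs.sub_le_add _ _
        _ ≤ Complex.abs lam * (2 * ρ) + ρ ^ 2 := by
            rw [map_mul, map_mul]
            have h1 : Complex.abs (a + b) ≤ 2 * ρ := by
              have := Complex.abs.add_le a b
              linarith
            have h2 : Complex.abs a * Complex.abs b ≤ ρ ^ 2 := by
              have := mul_le_mul hwp2 hwp1 (Complex.abs.nonneg b) hρ0.le
              nlinarith
            have := Complex.abs.nonneg lam
            nlinarith
        _ ≤ Complex.abs lam * (2 * ρ) + Complex.abs lam * ρ ^ 2 := by nlinarith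
        _ = Complex.abs lam * (2 * ρ + ρ ^ 2) := by ring
    have hden : Complex.abs lam ^ 2 * ((Complex.abs lam / 2) * (Complex.abs lam / 2))
        ≤ Complex.abs (lam ^ 2 * (A * B)) := by
      rw [map_mul, map_mul, map_pow]
      have h1 : (Complex.abs lam / 2) * (Complex.abs lam / 2) ≤ Complex.abs A * Complex.abs B := by
        apply mul_le_mul hAlb hBlb (by positivity) hApos.le
      nlinarith [sq_nonneg (Complex.abs lam)]
    calc Complex.abs ((p2 - p1) * (lam * (a + b) - a * b) / (lam ^ 2 * (A * B)))
        = Complex.abs (p2 - p1) * Complex.abs (lam * (a + b) - a * b) /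
            Complex.abs (lam ^ 2 * (A * B)) := by
          rw [map_div₀, map_mul]
      _ ≤ Complex.abs (p2 - p1) * (Complex.abs lam * (2 * ρ + ρ ^ 2)) /
            (Complex.abs lam ^ 2 * ((Complex.abs lam / 2) * (Complex.abs lam / 2))) := by
          apply div_le_div₀ (by positivity)
            (mul_le_mul_of_nonneg_left hnum (Complex.abs.nonneg _)) (by positivity) hden
      _ = (4 * Complex.abs (p2 - p1) * (2 * ρ + ρ ^ 2)) * (Complex.abs lam)⁻¹ ^ 3 := by
          field_simp
          ring
      _ ≤ (4 * Complex.abs (p2 - p1) * (2 * ρ + ρ ^ 2)) * (K ω ^ 3 * u p) := by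
          apply mul_le_mul_of_nonneg_left hinv3 (by positivity)
      _ = (4 * Complex.abs (p2 - p1) * (2 * ρ + ρ ^ 2) * K ω ^ 3) * u p := by ring
      _ ≤ ((4 * Complex.abs (p2 - p1) * (2 * ρ + ρ ^ 2) + 48 * Complex.abs (p1 - p2)) * K ω ^ 3)
            * u p := by
          apply mul_le_mul_of_nonneg_right _ (u_nonneg p)
          apply mul_le_mul_of_nonneg_right _ (pow_pos hK 3).le
          have : (0:ℝ) ≤ 48 * Complex.abs (p1 - p2) := by positivity
          linarith
      _ = (4 * Complex.abs (p2 - p1) * (2 * ρ + ρ ^ 2) + 48 * Complex.abs (p1 - p2)) * K ω ^ 3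
            * u p := by ring
  · -- bound for gterm
    have hid : gterm ω p1 p2 p w = (p1 - p2) * (A + B) / (A ^ 2 * B ^ 2) := by
      rw [gterm, ← hlam, ← hAdef, ← hBdef]
      have hab : p1 - p2 = A - B := by rw [hAdef, hBdef]; ring
      rw [hab]
      field_simp
      ring
    rw [hid]
    have hnum : Complex.abs (A + B) ≤ 3 * Complex.abs lam := by
      calc Complex.abs (A + B) ≤ Complex.abs A + Complex.abs B := Complex.abs.add_le _ _
        _ ≤ (Complex.abs lam + ρ) + (Complex.abs lam + ρ) := by
            have hA' : Complex.abs A ≤ Complex.abs lam + ρ := by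
              calc Complex.abs A = Complex.abs (a - lam) := by rw [hAdef]
                _ ≤ Complex.abs a + Complex.abs lam := Complex.abs.sub_le_add _ _
                _ ≤ Complex.abs lam + ρ := by linarith
            have hB'' : Complex.abs B ≤ Complex.abs lam + ρ := by
              calc Complex.abs B = Complex.abs (b - lam) := by rw [hBdef]
                _ ≤ Complex.abs b + Complex.abs lam := Complex.abs.sub_le_add _ _
                _ ≤ Complex.abs lam + ρ := by linarith
            linarith
        _ ≤ 3 * Complex.abs lam := by linarith
    have hden : ((Complex.abs lam / 2) ^ 2) * ((Complex.abs lam / 2) ^ 2)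
        ≤ Complex.abs (A ^ 2 * B ^ 2) := by
      rw [map_mul, map_pow, map_pow]
      have h1 : (Complex.abs lam / 2) ^ 2 ≤ Complex.abs A ^ 2 := by nlinarith
      have h2 : (Complex.abs lam / 2) ^ 2 ≤ Complex.abs B ^ 2 := by nlinarith
      nlinarith [sq_nonneg (Complex.abs lam / 2)]
    calc Complex.abs ((p1 - p2) * (A + B) / (A ^ 2 * B ^ 2))
        = Complex.abs (p1 - p2) * Complex.abs (A + B) / Complex.abs (A ^ 2 * B ^ 2) := by
          rw [map_div₀, map_mul]
      _ ≤ Complex.abs (p1 - p2) * (3 * Complex.abs lam) /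
            (((Complex.abs lam / 2) ^ 2) * ((Complex.abs lam / 2) ^ 2)) := by
          apply div_le_div₀ (by positivity)
            (mul_le_mul_of_nonneg_left hnum (Complex.abs.nonneg _)) (by positivity) hden
      _ = (48 * Complex.abs (p1 - p2)) * (Complex.abs lam)⁻¹ ^ 3 := by
          field_simp
          ring
      _ ≤ (48 * Complex.abs (p1 - p2)) * (K ω ^ 3 * u p) := by
          apply mul_le_mul_of_nonneg_left hinv3 (by positivity)
      _ = (48 * Complex.abs (p1 - p2) * K ω ^ 3) * u p := by ring
      _ ≤ ((4 * Complex.abs (p2 - p1) * (2 * ρ + ρ ^ 2) + 48 * Complex.abs (p1 - p2)) * K ω ^ 3)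
            * u p := by
          apply mul_le_mul_of_nonneg_right _ (u_nonneg p)
          apply mul_le_mul_of_nonneg_right _ (pow_pos hK 3).le
          have h1 : (0:ℝ) ≤ 4 * Complex.abs (p2 - p1) := by positivity
          nlinarith
      _ = (4 * Complex.abs (p2 - p1) * (2 * ρ + ρ ^ 2) + 48 * Complex.abs (p1 - p2)) * K ω ^ 3
            * u p := by ring




lemma lat_sub {ω a b : ℂ} (ha : a ∈ lattice ω) (hb : b ∈ lattice ω) : a - b ∈ lattice ω := by
  rw [sub_eq_add_neg]; exact lat_add ha (lat_neg hb)

lemma lattice_countable (ω : ℂ) : (lattice ω).Countable := by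
  have : lattice ω ⊆ Set.range (L ω) := by
    intro z hz
    obtain ⟨p, hp⟩ := mem_lattice_iff.1 hz
    exact ⟨p, hp.symm⟩
  exact (Set.countable_range _).mono this

lemma compl_lattice_open {ω : ℂ} (hω : ω.im ≠ 0) : IsOpen (lattice ω)ᶜ := by
  rw [Metric.isOpen_iff]
  intro q hq
  obtain ⟨ε, hε, hiso⟩ := isolate hω 0 0 q
  refine ⟨ε, hε, ?_⟩
  intro z hz
  by_cases h : z = q
  · rwa [h]
  · have := (hiso z hz h).1
    rwa [sub_zero] at this

lemma isOpen_latDom {ω : ℂ} (hω : ω.im ≠ 0) (p1 p2 : ℂ) : IsOpen (latDom ω p1 p2) := by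
  rw [Metric.isOpen_iff]
  intro q hq
  obtain ⟨ε, hε, hiso⟩ := isolate hω p1 p2 q
  refine ⟨ε, hε, ?_⟩
  intro z hz
  by_cases h : z = q
  · rwa [h]
  · exact hiso z hz h

lemma latDom_compl_countable (ω p1 p2 : ℂ) : (latDom ω p1 p2)ᶜ.Countable := by
  have : (latDom ω p1 p2)ᶜ ⊆ (fun z => p1 + z) '' lattice ω ∪ (fun z => p2 + z) '' lattice ω := by
    intro z hz
    simp only [latDom, Set.mem_compl_iff, Set.mem_setOf_eq, not_and_or, not_not] at hz
    rcases hz with h | h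
    · exact Or.inl ⟨z - p1, h, by ring⟩
    · exact Or.inr ⟨z - p2, h, by ring⟩
  exact (((lattice_countable ω).image _).union ((lattice_countable ω).image _)).mono this

lemma dense_latDom (ω p1 p2 : ℂ) : Dense (latDom ω p1 p2) := by
  have := (latDom_compl_countable ω p1 p2).dense_compl ℂ
  rwa [compl_compl] at this

lemma preconnected_latDom (ω p1 p2 : ℂ) : IsPreconnected (latDom ω p1 p2) := by
  have h1 : (1 : Cardinal) < Module.rank ℝ ℂ := by
    rw [Complex.rank_real_complex]
    have h2 : ((1:ℕ) : Cardinal.{0}) < ((2:ℕ) : Cardinal.{0}) := by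
      rw [Nat.cast_lt]
      norm_num
    simpa using h2
  have := ((latDom_compl_countable ω p1 p2).isPathConnected_compl_of_one_lt_rank h1)
  rw [compl_compl] at this
  exact this.isConnected.isPreconnected

lemma dense_compl_lattice (ω : ℂ) : Dense (lattice ω)ᶜ :=
  (lattice_countable ω).dense_compl ℂ

section Pfacts

variable {ω : ℂ} {P : ℂ → ℂ}

lemma not_lat_add {z q : ℂ} (hz : z ∉ lattice ω) (hq : q ∈ lattice ω) : z + q ∉ lattice ω := by
  rw [lat_add_iff hq]; exact hz

/-- Lattice periodicity of `P` from the generators. -/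
lemma P_per (hPper1 : ∀ z ∉ lattice ω, P (z + 1) = P z)
    (hPperω : ∀ z ∉ lattice ω, P (z + ω) = P z) :
    ∀ z ∉ lattice ω, ∀ q ∈ lattice ω, P (z + q) = P z := by
  have key1 : ∀ (m : ℤ), ∀ z ∉ lattice ω, P (z + (m : ℂ)) = P z := by
    intro m
    induction m using Int.induction_on with
    | zero => intro z _; simp
    | succ k ih =>
        intro z hz
        have hzk : z + (k : ℂ) ∉ lattice ω := by
          apply not_lat_add hz
          exact_mod_cast mem_lattice_iff.2 ⟨((k : ℤ), 0), by simp [L]⟩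
        have := hPper1 _ hzk
        push_cast
        rw [show z + ((k : ℂ) + 1) = z + (k : ℂ) + 1 by ring, this]
        have := ih z hz
        push_cast at this
        exact this
    | pred k ih =>
        intro z hz
        have hzk : z + (-(k : ℂ) - 1) ∉ lattice ω := by
          apply not_lat_add hz
          exact mem_lattice_iff.2 ⟨((-(k : ℤ) - 1), 0), by push_cast; simp [L]⟩
        have h2 := hPper1 _ hzk
        rw [show z + (-(k:ℂ) - 1) + 1 = z + -(k:ℂ) by ring] at h2
        have ih' := ih z hz
        push_cast at ih' ⊢
        calc P (z + (-(k:ℂ) - 1)) = P (z + -(k:ℂ)) := h2.symm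
          _ = P z := ih'
  have keyw : ∀ (n : ℤ), ∀ z ∉ lattice ω, P (z + (n : ℂ) * ω) = P z := by
    intro n
    induction n using Int.induction_on with
    | zero => intro z _; simp
    | succ k ih =>
        intro z hz
        have hzk : z + (k : ℂ) * ω ∉ lattice ω := by
          apply not_lat_add hz
          exact mem_lattice_iff.2 ⟨(0, (k : ℤ)), by simp [L]⟩
        have := hPperω _ hzk
        push_cast
        rw [show z + ((k : ℂ) + 1) * ω = z + (k : ℂ) * ω + ω by ring, this]
        have := ih z hz
        push_cast at this
        exact this
    | pred k ih =>
        intro z hz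
        have hzk : z + (-(k : ℂ) - 1) * ω ∉ lattice ω := by
          apply not_lat_add hz
          exact mem_lattice_iff.2 ⟨(0, (-(k : ℤ) - 1)), by push_cast; simp [L]⟩
        have h2 := hPperω _ hzk
        rw [show z + (-(k:ℂ) - 1) * ω + ω = z + -(k:ℂ) * ω by ring] at h2
        have ih' := ih z hz
        push_cast at ih' ⊢
        calc P (z + (-(k:ℂ) - 1) * ω) = P (z + -(k:ℂ) * ω) := h2.symm
          _ = P z := ih'
  intro z hz q hq
  obtain ⟨m, n, rfl⟩ := hq
  have hzn : z + (n : ℂ) * ω ∉ lattice ω := by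
    apply not_lat_add hz
    exact mem_lattice_iff.2 ⟨(0, n), by simp [L]⟩
  rw [show z + ((m : ℂ) + (n : ℂ) * ω) = (z + (n:ℂ) * ω) + (m : ℂ) by ring,
    key1 m _ hzn, keyw n z hz]

/-- `P` is even: the first Liouville argument. -/
lemma P_even (hω : ω.im ≠ 0)
    (hP : DifferentiableOn ℂ P {z : ℂ | z ∉ lattice ω})
    (hPper1 : ∀ z ∉ lattice ω, P (z + 1) = P z)
    (hPperω : ∀ z ∉ lattice ω, P (z + ω) = P z)
    (hPpp : ∃ V ∈ nhds (0:ℂ), ∃ g : ℂ → ℂ, DifferentiableOn ℂ g V ∧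
      ∀ z ∈ V, z ≠ 0 → g z = P z - 1 / z^2) :
    ∀ z ∉ lattice ω, P (-z) = P z := by
  obtain ⟨V, hV, gV, hgV, hgVeq⟩ := hPpp
  obtain ⟨ρV, hρV, hρVsub⟩ := Metric.mem_nhds_iff.1 hV
  have hper := P_per hPper1 hPperω
  have hsetc : {z : ℂ | z ∉ lattice ω} = (lattice ω)ᶜ := rfl
  set E : ℂ → ℂ := fun z => P z - P (-z) with hE
  have hEdiff : DifferentiableOn ℂ E (lattice ω)ᶜ := by
    apply DifferentiableOn.sub
    · rw [← hsetc]; exact hP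
    · have : DifferentiableOn ℂ (fun z => P (-z)) (lattice ω)ᶜ := by
        apply DifferentiableOn.comp (t := {z : ℂ | z ∉ lattice ω})
        · exact hP
        · exact differentiable_neg.differentiableOn
        · intro z hz
          simp only [Set.mem_setOf_eq]
          rw [Set.mem_compl_iff] at hz
          intro hc
          exact hz (by rw [← neg_neg z]; exact lat_neg hc)
      exact this
  have hloc : ∀ q ∈ lattice ω, ∃ ε > 0, (∀ z ∈ ball q ε, z ≠ q → z ∉ lattice ω) ∧
      ∃ h : ℂ → ℂ, DifferentiableOn ℂ h (ball q ε) ∧ ∀ z ∈ ball q ε, z ≠ q → E z = h z := by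
    intro q hq
    obtain ⟨ε, hε, hiso⟩ := isolate hω 0 0 q
    set ε' := min ε ρV with hε'
    have hε'pos : 0 < ε' := lt_min hε hρV
    refine ⟨ε', hε'pos, ?_, ?_⟩
    · intro z hz hzq
      have := (hiso z (ball_subset_ball (min_le_left _ _) hz) hzq).1
      rwa [sub_zero] at this
    · refine ⟨fun z => gV (z - q) - gV (q - z), ?_, ?_⟩
      · apply DifferentiableOn.sub
        · apply DifferentiableOn.comp hgV ((differentiable_id.sub_const q).differentiableOn)
          intro z hz
          apply hρVsub
          rw [mem_ball] at hz ⊢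
          simp only [dist_eq, sub_zero]
          rw [Complex.dist_eq] at hz
          calc Complex.abs (z - q) < ε' := hz
            _ ≤ ρV := min_le_right _ _
        · apply DifferentiableOn.comp hgV ((differentiable_const q).sub differentiable_id).differentiableOn
          intro z hz
          apply hρVsub
          rw [mem_ball] at hz ⊢
          simp only [dist_eq, sub_zero, id_eq]
          rw [Complex.dist_eq] at hz
          have habs : Complex.abs (q - z) = Complex.abs (z - q) := by
            rw [show q - z = -(z - q) by ring, map_neg_eq_map]
          show Complex.abs (q - z) < ρV; rw [habs]
          calc Complex.abs (z - q) < ε' := hz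
            _ ≤ ρV := min_le_right _ _
      · intro z hz hzq
        have hzlat : z ∉ lattice ω := by
          have := (hiso z (ball_subset_ball (min_le_left _ _) hz) hzq).1
          rwa [sub_zero] at this
        have hzq' : z - q ∉ lattice ω := by
          intro hc
          exact hzlat (by have := lat_add hc hq; simpa using this)
        have hnzq : -z + q ∉ lattice ω := by
          intro hc
          apply hzlat
          rw [← neg_neg z]
          apply lat_neg
          have := lat_add hc (lat_neg hq)
          simpa using this
        have hzqV : z - q ∈ V := by
          apply hρVsub
          rw [mem_ball] at hz ⊢
          simp only [dist_eq, sub_zero]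
          rw [Complex.dist_eq] at hz
          calc Complex.abs (z - q) < ε' := hz
            _ ≤ ρV := min_le_right _ _
        have hqzV : q - z ∈ V := by
          apply hρVsub
          rw [mem_ball] at hz ⊢
          simp only [dist_eq, sub_zero]
          have : Complex.abs (q - z) = Complex.abs (z - q) := by
            rw [show q - z = -(z - q) by ring, map_neg_eq_map]
          rw [Complex.dist_eq] at hz
          show Complex.abs (q - z) < ρV; rw [this]
          calc Complex.abs (z - q) < ε' := hz
            _ ≤ ρV := min_le_right _ _
        have hzq0 : z - q ≠ 0 := sub_ne_zero.2 hzq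
        have hqz0 : q - z ≠ 0 := sub_ne_zero.2 (Ne.symm hzq)
        have e1 : P z = gV (z - q) + 1 / (z - q) ^ 2 := by
          have h1 : P z = P (z - q) := by
            have := hper (z - q) hzq' q hq
            rw [sub_add_cancel] at this
            exact this
          rw [h1]
          have := hgVeq (z - q) hzqV hzq0
          rw [this]; ring
        have e2 : P (-z) = gV (q - z) + 1 / (q - z) ^ 2 := by
          have hqz' : q - z ∉ lattice ω := by
            intro hc
            apply hzq'
            have := lat_neg hc
            simpa using this
          have h1 : P (-z) = P (q - z) := by
            have := hper (q - z) hqz' (-q) (lat_neg hq)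
            rw [show q - z + -q = -z by ring] at this
            exact this
          rw [h1]
          have := hgVeq (q - z) hqzV hqz0
          rw [this]; ring
        rw [hE]
        show P z - P (-z) = gV (z - q) - gV (q - z)
        rw [e1, e2, show q - z = -(z - q) by ring, neg_sq]
        ring
  obtain ⟨Et, hEt_diff, hEt_eq⟩ := glue (compl_lattice_open hω) hEdiff hloc
  -- periodicity of Et
  have hEtper1 : ∀ z, Et (z + 1) = Et z := by
    have hc1 : Continuous fun z => Et (z + 1) :=
      hEt_diff.continuous.comp (continuous_id.add continuous_const)
    have := Continuous.ext_on (dense_compl_lattice ω) hc1 hEt_diff.continuous ?_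
    · exact fun z => congrFun this z
    · intro z hz
      show Et (z + 1) = Et z
      rw [Set.mem_compl_iff] at hz
      have hz1 : z + 1 ∉ lattice ω := by rw [lat_add_iff (lat_one ω)]; exact hz
      rw [hEt_eq _ hz1, hEt_eq _ hz]
      show E (z + 1) = E z
      rw [hE]
      simp only
      have a1 : P (z + 1) = P z := hPper1 z hz
      have hnz : -z - 1 ∉ lattice ω := by
        intro hc
        apply hz
        have := lat_neg hc
        rw [show -(-z - 1) = z + 1 by ring] at this
        rwa [lat_add_iff (lat_one ω)] at this
      have a2 : P (-(z + 1)) = P (-z) := by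
        have := hPper1 (-z - 1) hnz
        rw [show -z - 1 + 1 = -z by ring] at this
        rw [show -(z+1) = -z - 1 by ring, this]
      rw [a1, a2]
  have hEtperω : ∀ z, Et (z + ω) = Et z := by
    have hc1 : Continuous fun z => Et (z + ω) :=
      hEt_diff.continuous.comp (continuous_id.add continuous_const)
    have := Continuous.ext_on (dense_compl_lattice ω) hc1 hEt_diff.continuous ?_
    · exact fun z => congrFun this z
    · intro z hz
      show Et (z + ω) = Et z
      rw [Set.mem_compl_iff] at hz
      have hz1 : z + ω ∉ lattice ω := by rw [lat_add_iff (lat_omega ω)]; exact hz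
      rw [hEt_eq _ hz1, hEt_eq _ hz]
      show E (z + ω) = E z
      rw [hE]
      simp only
      have a1 : P (z + ω) = P z := hPperω z hz
      have hnz : -z - ω ∉ lattice ω := by
        intro hc
        apply hz
        have := lat_neg hc
        rw [show -(-z - ω) = z + ω by ring] at this
        rwa [lat_add_iff (lat_omega ω)] at this
      have a2 : P (-(z + ω)) = P (-z) := by
        have := hPperω (-z - ω) hnz
        rw [show -z - ω + ω = -z by ring] at this
        rw [show -(z+ω) = -z - ω by ring, this]
      rw [a1, a2]
  -- boundedness
  have hbdd : Bornology.IsBounded (Set.range Et) := by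
    set Kf := (fun t : ℝ × ℝ => (t.1 : ℂ) + (t.2 : ℂ) * ω) '' (Icc (0:ℝ) 1 ×ˢ Icc (0:ℝ) 1) with hKf
    have hKfc : IsCompact Kf :=
      (isCompact_Icc.prod isCompact_Icc).image (by continuity)
    have hsub : Set.range Et ⊆ Et '' Kf := by
      rintro y ⟨z, rfl⟩
      obtain ⟨m, n, hmn⟩ := exists_translate hω z
      refine ⟨z - ((m : ℂ) + (n : ℂ) * ω), hmn, ?_⟩
      have := per_lattice hEtper1 hEtperω (z - ((m : ℂ) + (n : ℂ) * ω)) m n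
      rw [sub_add_cancel] at this
      exact this.symm
    exact ((hKfc.image hEt_diff.continuous).isBounded).subset hsub
  -- Liouville
  have hconst : ∀ z w, Et z = Et w := fun z w =>
    hEt_diff.apply_eq_apply_of_bounded hbdd z w
  -- oddness
  have hodd : ∀ z, Et (-z) = - Et z := by
    have hc1 : Continuous fun z => Et (-z) := hEt_diff.continuous.comp continuous_neg
    have hc2 : Continuous fun z => - Et z := hEt_diff.continuous.neg
    have := Continuous.ext_on (dense_compl_lattice ω) hc1 hc2 ?_
    · exact fun z => congrFun this z
    · intro z hz
      show Et (-z) = - Et z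
      rw [Set.mem_compl_iff] at hz
      have hnz : -z ∉ lattice ω := fun hc => hz (lat_neg_iff.1 hc)
      rw [hEt_eq _ hnz, hEt_eq _ hz]
      show E (-z) = - E z
      rw [hE]
      simp only
      rw [neg_neg]
      ring
  have hzero : ∀ z, Et z = 0 := by
    intro z
    have h0 := hodd 0
    rw [neg_zero] at h0
    have : Et 0 = 0 := by linear_combination h0 / 2
    rw [hconst z 0, this]
  intro z hz
  have hnz : -z ∉ lattice ω := fun hc => hz (lat_neg_iff.1 hc)
  have := hzero z
  rw [hEt_eq _ hz] at this
  have hEz : E z = 0 := this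
  rw [hE] at hEz
  simp only at hEz
  linear_combination -hEz

end Pfacts




/-- Explicit reindexing equivalences (fast to unify). -/
def shiftEquiv (c : ℤ × ℤ) : (ℤ × ℤ) ≃ (ℤ × ℤ) :=
  ⟨fun p => p - c, fun p => p + c, fun p => by simp, fun p => by simp⟩

def negEquiv : (ℤ × ℤ) ≃ (ℤ × ℤ) :=
  ⟨fun p => -p, fun p => -p, fun p => by simp, fun p => by simp⟩

/-- The `ζ`-difference function. -/
def wtF (ω p1 p2 : ℂ) : ℂ → ℂ := fun z => ∑' p, fterm ω p1 p2 p z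

/-- Its derivative, the `℘`-difference. -/
def DF (ω p1 p2 : ℂ) : ℂ → ℂ := fun z => ∑' p, gterm ω p1 p2 p z

section core

variable {ω p1 p2 : ℂ}

lemma latDom_mem_iff {z : ℂ} : z ∈ latDom ω p1 p2 ↔ z - p1 ∉ lattice ω ∧ z - p2 ∉ lattice ω :=
  Iff.rfl

lemma fterm_ne_zero {z : ℂ} (hz : z ∈ latDom ω p1 p2) (p : ℤ × ℤ) :
    z - p1 - L ω p ≠ 0 ∧ z - p2 - L ω p ≠ 0 := by
  constructor
  · intro h
    apply hz.1
    have : z - p1 = L ω p := by linear_combination h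
    rw [this]; exact L_mem ω p
  · intro h
    apply hz.2
    have : z - p2 = L ω p := by linear_combination h
    rw [this]; exact L_mem ω p

lemma fterm_diffOn (s : Set ℂ) (hs : s ⊆ latDom ω p1 p2) (p : ℤ × ℤ) :
    DifferentiableOn ℂ (fterm ω p1 p2 p) s := by
  intro z hz
  obtain ⟨h1, h2⟩ := fterm_ne_zero (hs hz) p
  exact (hasDerivAt_fterm p h1 h2).differentiableAt.differentiableWithinAt

lemma gterm_diffAt {z : ℂ} (p : ℤ × ℤ) (h1 : z - p1 - L ω p ≠ 0) (h2 : z - p2 - L ω p ≠ 0) :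
    DifferentiableAt ℂ (gterm ω p1 p2 p) z := by
  apply DifferentiableAt.sub
  · exact (((differentiableAt_id.sub_const p1).sub_const (L ω p)).pow 2).inv (pow_ne_zero 2 h1)
  · exact (((differentiableAt_id.sub_const p2).sub_const (L ω p)).pow 2).inv (pow_ne_zero 2 h2)

lemma gterm_diffOn (s : Set ℂ) (hs : s ⊆ latDom ω p1 p2) (p : ℤ × ℤ) :
    DifferentiableOn ℂ (gterm ω p1 p2 p) s := by
  intro z hz
  obtain ⟨h1, h2⟩ := fterm_ne_zero (hs hz) p
  exact (gterm_diffAt p h1 h2).differentiableWithinAt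

/-- The main local structure result at points of `latDom`. -/
lemma core (hω : ω.im ≠ 0) (z₀ : ℂ) (hz₀ : z₀ ∈ latDom ω p1 p2) :
    Summable (fun p => fterm ω p1 p2 p z₀) ∧ Summable (fun p => gterm ω p1 p2 p z₀) ∧
    HasDerivAt (wtF ω p1 p2) (DF ω p1 p2 z₀) z₀ ∧ DifferentiableAt ℂ (DF ω p1 p2) z₀ := by
  obtain ⟨δ, hδ, hball⟩ := Metric.isOpen_iff.1 (isOpen_latDom hω p1 p2) z₀ hz₀
  set r := δ / 2 with hrdef
  have hr : 0 < r := by positivity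
  have hball2 : ball z₀ (2 * r) ⊆ latDom ω p1 p2 := by
    intro x hx
    apply hball
    rw [mem_ball] at hx ⊢
    calc dist x z₀ < 2 * r := hx
      _ = δ := by rw [hrdef]; ring
  have hball1 : ball z₀ r ⊆ latDom ω p1 p2 := fun x hx =>
    hball2 (ball_subset_ball (by linarith) hx)
  obtain ⟨C, N, hC0, hN0, hCN⟩ := terms_bound ω p1 p2 hω z₀ r
  have machf := machinery (fterm ω p1 p2) z₀ r (fterm_diffOn _ hball2)
    (fun p hp w hw => (hCN p hp w hw).2.2.1)
  have machg := machinery (gterm ω p1 p2) z₀ r (gterm_diffOn _ hball2)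
    (fun p hp w hw => (hCN p hp w hw).2.2.2)
  have hmem : z₀ ∈ ball z₀ r := mem_ball_self hr
  refine ⟨machf.1 z₀ hmem, machg.1 z₀ hmem, ?_, ?_⟩
  · have hda : DifferentiableAt ℂ (wtF ω p1 p2) z₀ :=
      machf.2.1.differentiableAt (isOpen_ball.mem_nhds hmem)
    have hds := machf.2.2 z₀ hmem
    have hterm : (fun p => deriv (fterm ω p1 p2 p) z₀) = fun p => gterm ω p1 p2 p z₀ := by
      funext p
      obtain ⟨h1, h2⟩ := fterm_ne_zero hz₀ p
      exact (hasDerivAt_fterm p h1 h2).deriv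
    rw [hterm] at hds
    have : DF ω p1 p2 z₀ = deriv (wtF ω p1 p2) z₀ := hds.tsum_eq
    rw [this]
    exact hda.hasDerivAt
  · exact machg.2.1.differentiableAt (isOpen_ball.mem_nhds hmem)

lemma gterm_shift1 (z : ℂ) (p : ℤ × ℤ) :
    gterm ω p1 p2 p (z + 1) = gterm ω p1 p2 (p - (1, 0)) z := by
  have hL : L ω (p - (1, 0)) = L ω p - 1 := by
    rw [L_sub]
    have : L ω ((1, 0) : ℤ × ℤ) = 1 := by simp [L]
    rw [this]
  simp only [gterm, hL]
  rw [show z - p1 - (L ω p - 1) = z + 1 - p1 - L ω p by ring,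
    show z - p2 - (L ω p - 1) = z + 1 - p2 - L ω p by ring]

lemma DF_per1 : ∀ z, DF ω p1 p2 (z + 1) = DF ω p1 p2 z := by
  intro z
  show ∑' p, gterm ω p1 p2 p (z + 1) = ∑' p, gterm ω p1 p2 p z
  calc ∑' p, gterm ω p1 p2 p (z + 1)
      = ∑' p, gterm ω p1 p2 (p - (1, 0)) z := tsum_congr (fun p => gterm_shift1 z p)
    _ = ∑' p, gterm ω p1 p2 p z := Equiv.tsum_eq (shiftEquiv (1, 0)) (fun p => gterm ω p1 p2 p z)

lemma gterm_shiftω (z : ℂ) (p : ℤ × ℤ) :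
    gterm ω p1 p2 p (z + ω) = gterm ω p1 p2 (p - (0, 1)) z := by
  have hL : L ω (p - (0, 1)) = L ω p - ω := by
    rw [L_sub]
    have : L ω ((0, 1) : ℤ × ℤ) = ω := by simp [L]
    rw [this]
  simp only [gterm, hL]
  rw [show z - p1 - (L ω p - ω) = z + ω - p1 - L ω p by ring,
    show z - p2 - (L ω p - ω) = z + ω - p2 - L ω p by ring]

lemma DF_perω : ∀ z, DF ω p1 p2 (z + ω) = DF ω p1 p2 z := by
  intro z
  show ∑' p, gterm ω p1 p2 p (z + ω) = ∑' p, gterm ω p1 p2 p z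
  calc ∑' p, gterm ω p1 p2 p (z + ω)
      = ∑' p, gterm ω p1 p2 (p - (0, 1)) z := tsum_congr (fun p => gterm_shiftω z p)
    _ = ∑' p, gterm ω p1 p2 p z := Equiv.tsum_eq (shiftEquiv (0, 1)) (fun p => gterm ω p1 p2 p z)

lemma gterm_neg (z : ℂ) (p : ℤ × ℤ) :
    gterm ω p1 p2 (-p) (p1 + p2 - z) = - gterm ω p1 p2 p z := by
  simp only [gterm, L_neg]
  rw [show p1 + p2 - z - p1 - - L ω p = -(z - p2 - L ω p) by ring,
    show p1 + p2 - z - p2 - - L ω p = -(z - p1 - L ω p) by ring, neg_sq, neg_sq]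
  ring

lemma DF_odd : ∀ z, DF ω p1 p2 (p1 + p2 - z) = - DF ω p1 p2 z := by
  intro z
  show ∑' p, gterm ω p1 p2 p (p1 + p2 - z) = - ∑' p, gterm ω p1 p2 p z
  calc ∑' p, gterm ω p1 p2 p (p1 + p2 - z)
      = ∑' p, gterm ω p1 p2 (-p) (p1 + p2 - z) :=
        (Equiv.tsum_eq negEquiv (fun p => gterm ω p1 p2 p (p1 + p2 - z))).symm
    _ = ∑' p, - gterm ω p1 p2 p z := tsum_congr (fun p => gterm_neg z p)
    _ = - ∑' p, gterm ω p1 p2 p z := tsum_neg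

lemma fterm_neg (z : ℂ) (p : ℤ × ℤ) :
    fterm ω p1 p2 (-p) (p1 + p2 - z) = fterm ω p1 p2 p z := by
  simp only [fterm, L_neg, neg_sq]
  rw [show p1 + p2 - z - p2 - - L ω p = -(z - p1 - L ω p) by ring,
    show p1 + p2 - z - p1 - - L ω p = -(z - p2 - L ω p) by ring, inv_neg, inv_neg]
  ring

lemma wt_even : ∀ z, wtF ω p1 p2 (p1 + p2 - z) = wtF ω p1 p2 z := by
  intro z
  show ∑' p, fterm ω p1 p2 p (p1 + p2 - z) = ∑' p, fterm ω p1 p2 p z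
  calc ∑' p, fterm ω p1 p2 p (p1 + p2 - z)
      = ∑' p, fterm ω p1 p2 (-p) (p1 + p2 - z) :=
        (Equiv.tsum_eq negEquiv (fun p => fterm ω p1 p2 p (p1 + p2 - z))).symm
    _ = ∑' p, fterm ω p1 p2 p z := tsum_congr (fun p => fterm_neg z p)

lemma latDom_add {q : ℂ} (hq : q ∈ lattice ω) {z : ℂ} (hz : z ∈ latDom ω p1 p2) :
    z + q ∈ latDom ω p1 p2 := by
  constructor
  · rw [show z + q - p1 = (z - p1) + q by ring, lat_add_iff hq]
    exact hz.1
  · rw [show z + q - p2 = (z - p2) + q by ring, lat_add_iff hq]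
    exact hz.2

lemma latDom_sub_s {z : ℂ} (hz : z ∈ latDom ω p1 p2) : p1 + p2 - z ∈ latDom ω p1 p2 := by
  constructor
  · rw [show p1 + p2 - z - p1 = -(z - p2) by ring, lat_neg_iff]
    exact hz.2
  · rw [show p1 + p2 - z - p2 = -(z - p1) by ring, lat_neg_iff]
    exact hz.1

lemma wt_per (hω : ω.im ≠ 0) (μ : ℂ) (hμ : μ ∈ lattice ω)
    (hDF : ∀ z, DF ω p1 p2 (z + μ) = DF ω p1 p2 z) :
    ∀ z ∈ latDom ω p1 p2, wtF ω p1 p2 (z + μ) = wtF ω p1 p2 z := by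
  intro z hz
  set ψ : ℂ → ℂ := fun w => wtF ω p1 p2 (w + μ) - wtF ω p1 p2 w with hψdef
  have hψ : ∀ w ∈ latDom ω p1 p2, HasDerivAt ψ 0 w := by
    intro w hw
    have hw' : w + μ ∈ latDom ω p1 p2 := latDom_add hμ hw
    have h1 : HasDerivAt (fun x => wtF ω p1 p2 (x + μ)) (DF ω p1 p2 (w + μ)) w := by
      have hcomp := HasDerivAt.comp w ((core hω (w + μ) hw').2.2.1)
        ((hasDerivAt_id w).add_const μ)
      simpa [Function.comp_def] using hcomp
    have h2 := (core hω w hw).2.2.1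
    have := h1.sub h2
    rw [hDF w, sub_self] at this
    exact this
  have hzs : p1 + p2 - (z + μ) ∈ latDom ω p1 p2 := latDom_sub_s (latDom_add hμ hz)
  have hc := const_of_deriv_zero (isOpen_latDom hω p1 p2) (preconnected_latDom ω p1 p2)
    hψ hz hzs
  have hval : ψ (p1 + p2 - (z + μ)) = - ψ z := by
    rw [hψdef]
    simp only
    rw [show p1 + p2 - (z + μ) + μ = p1 + p2 - z by ring, wt_even, wt_even]
    ring
  have h0 : ψ z = 0 := by
    have h := hc.trans hval
    linear_combination h / 2
  have : wtF ω p1 p2 (z + μ) - wtF ω p1 p2 z = 0 := h0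
  linear_combination this

/-- The singular set of `latDom`. -/
lemma latDom_compl_mem {q : ℂ} (hq : q ∉ latDom ω p1 p2) :
    q - p1 ∈ lattice ω ∨ q - p2 ∈ lattice ω := by
  by_contra hcon
  push_neg at hcon
  exact hq ⟨hcon.1, hcon.2⟩

set_option maxHeartbeats 1000000 in
/-- The key identity `DF = P(· - p1) - P(· - p2)`, by the Liouville argument. -/
lemma DF_eq {P : ℂ → ℂ} (hω : ω.im ≠ 0) (hp : p1 - p2 ∉ lattice ω)
    (hP : DifferentiableOn ℂ P {z : ℂ | z ∉ lattice ω})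
    (hPper1 : ∀ z ∉ lattice ω, P (z + 1) = P z)
    (hPperω : ∀ z ∉ lattice ω, P (z + ω) = P z)
    (hPpp : ∃ V ∈ nhds (0:ℂ), ∃ g : ℂ → ℂ, DifferentiableOn ℂ g V ∧
      ∀ z ∈ V, z ≠ 0 → g z = P z - 1 / z^2) :
    ∀ z ∈ latDom ω p1 p2, DF ω p1 p2 z = P (z - p1) - P (z - p2) := by
  classical
  obtain ⟨V, hV, gV, hgV, hgVeq⟩ := hPpp
  obtain ⟨ρV, hρV, hρVsub⟩ := Metric.mem_nhds_iff.1 hV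
  have hper := P_per hPper1 hPperω
  have heven := P_even hω hP hPper1 hPperω ⟨V, hV, gV, hgV, hgVeq⟩
  set G : ℂ → ℂ := fun z => DF ω p1 p2 z - (P (z - p1) - P (z - p2)) with hGdef
  have hPdiff1 : DifferentiableOn ℂ (fun z => P (z - p1)) (latDom ω p1 p2) := by
    apply DifferentiableOn.comp (t := {z : ℂ | z ∉ lattice ω}) hP
      ((differentiable_id.sub_const p1).differentiableOn)
    intro z hz
    exact hz.1
  have hPdiff2 : DifferentiableOn ℂ (fun z => P (z - p2)) (latDom ω p1 p2) := by
    apply DifferentiableOn.comp (t := {z : ℂ | z ∉ lattice ω}) hP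
      ((differentiable_id.sub_const p2).differentiableOn)
    intro z hz
    exact hz.2
  have hGdiff : DifferentiableOn ℂ G (latDom ω p1 p2) := by
    apply DifferentiableOn.sub
    · intro z hz
      exact ((core hω z hz).2.2.2).differentiableWithinAt
    · exact hPdiff1.sub hPdiff2
  have hcompl : (latDom ω p1 p2)ᶜᶜ = latDom ω p1 p2 := compl_compl _
  -- local extensions at singular points
  have hloc : ∀ q ∈ (latDom ω p1 p2)ᶜ, ∃ ε > 0,
      (∀ z ∈ ball q ε, z ≠ q → z ∉ (latDom ω p1 p2)ᶜ) ∧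
      ∃ h : ℂ → ℂ, DifferentiableOn ℂ h (ball q ε) ∧
        ∀ z ∈ ball q ε, z ≠ q → G z = h z := by
    intro q hq
    obtain ⟨ε, hε, hiso⟩ := isolate hω p1 p2 q
    set r : ℝ := min (ε / 4) (ρV / 2) with hrdef
    have hr : 0 < r := lt_min (by linarith) (by linarith)
    have hsubε : ball q (2 * r) ⊆ ball q ε := by
      apply ball_subset_ball
      calc 2 * r ≤ 2 * (ε / 4) := by
            have := min_le_left (ε / 4) (ρV / 2)
            linarith
        _ ≤ ε := by linarith
    have hsubε1 : ball q r ⊆ ball q ε := fun x hx => hsubε (ball_subset_ball (by linarith) hx)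
    have hrρ : ∀ z ∈ ball q r, z - q ∈ V := by
      intro z hz
      apply hρVsub
      rw [mem_ball] at hz ⊢
      rw [Complex.dist_eq] at hz
      simp only [dist_eq, sub_zero]
      calc Complex.abs (z - q) < r := hz
        _ ≤ ρV / 2 := min_le_right _ _
        _ < ρV := by linarith
    have hdom : ∀ z ∈ ball q (2 * r), z ≠ q → z ∈ latDom ω p1 p2 := by
      intro z hz hzq
      exact ⟨(hiso z (hsubε hz) hzq).1, (hiso z (hsubε hz) hzq).2⟩
    rcases latDom_compl_mem hq with hq1 | hq1
    · -- q = p1 + L p₀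
      obtain ⟨p₀, hp₀⟩ := mem_lattice_iff.1 hq1
      have hq2 : q - p2 ∉ lattice ω := by
        intro hc
        apply hp
        have : p1 - p2 = (q - p2) - (q - p1) := by ring
        rw [this]
        exact lat_sub hc hq1
      set Fm : ℤ × ℤ → ℂ → ℂ := fun p z => if p = p₀ then 0 else gterm ω p1 p2 p z with hFm
      have hd : ∀ p, DifferentiableOn ℂ (Fm p) (ball q (2 * r)) := by
        intro p
        by_cases hpp : p = p₀
        · simp only [hFm, hpp, if_pos]
          exact differentiableOn_const 0
        · have : Fm p = gterm ω p1 p2 p := by funext z; simp [hFm, hpp]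
          rw [this]
          intro z hz
          have h1 : z - p1 - L ω p ≠ 0 := by
            intro hzero
            have hzl : z - p1 = L ω p := by linear_combination hzero
            by_cases hzq : z = q
            · apply hpp
              apply L_inj hω
              rw [← hzl, hzq, ← hp₀]
            · exact ((hiso z (hsubε hz) hzq).1) (by rw [hzl]; exact L_mem ω p)
          have h2 : z - p2 - L ω p ≠ 0 := by
            intro hzero
            have hzl : z - p2 = L ω p := by linear_combination hzero
            by_cases hzq : z = q
            · apply hq2
              rw [hzq] at hzl
              rw [hzl]
              exact L_mem ω p
            · exact ((hiso z (hsubε hz) hzq).2) (by rw [hzl]; exact L_mem ω p)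
          exact (gterm_diffAt p h1 h2).differentiableWithinAt
      obtain ⟨C, N, hC0, hN0, hCN⟩ := terms_bound ω p1 p2 hω q r
      have hC' : ∀ p : ℤ × ℤ, N ≤ ((max p.1.natAbs p.2.natAbs : ℕ) : ℝ) →
          ∀ w ∈ ball q r, ‖Fm p w‖ ≤ C * u p := by
        intro p hpN w hw
        by_cases hpp : p = p₀
        · simp only [hFm, hpp, if_pos, norm_zero]
          exact mul_nonneg hC0 (by unfold u; positivity)
        · simp only [hFm, hpp, if_neg, ite_false]
          exact (hCN p hpN w hw).2.2.2
      have mach := machinery Fm q r hd hC'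
      set T : ℂ → ℂ := fun z => ∑' p, Fm p z with hT
      refine ⟨r, hr, ?_, ?_⟩
      · intro z hz hzq
        simp only [Set.mem_compl_iff, not_not]
        exact hdom z (ball_subset_ball (by linarith) hz) hzq
      · refine ⟨fun z => T z - ((z - p2 - L ω p₀) ^ 2)⁻¹ - gV (z - q) + P (z - p2), ?_, ?_⟩
        · apply DifferentiableOn.add
          · apply DifferentiableOn.sub
            · apply DifferentiableOn.sub mach.2.1
              · intro z hz
                have hne : z - p2 - L ω p₀ ≠ 0 := by
                  intro hzero
                  have hzl : z - p2 = L ω p₀ := by linear_combination hzero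
                  by_cases hzq : z = q
                  · apply hq2; rw [hzq] at hzl; rw [hzl]; exact L_mem ω p₀
                  · exact ((hiso z (hsubε1 hz) hzq).2) (by rw [hzl]; exact L_mem ω p₀)
                exact ((((differentiableAt_id.sub_const p2).sub_const (L ω p₀)).pow 2).inv
                  (pow_ne_zero 2 hne)).differentiableWithinAt
            · apply DifferentiableOn.comp hgV ((differentiable_id.sub_const q).differentiableOn)
              intro z hz
              exact hrρ z hz
          · apply DifferentiableOn.comp (t := {z : ℂ | z ∉ lattice ω}) hP
              ((differentiable_id.sub_const p2).differentiableOn)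
            intro z hz
            show z - p2 ∉ lattice ω
            intro hc
            by_cases hzq : z = q
            · apply hq2; rw [← hzq]; exact hc
            · exact ((hiso z (hsubε1 hz) hzq).2) hc
        · intro z hz hzq
          have hzdom : z ∈ latDom ω p1 p2 := hdom z (ball_subset_ball (by linarith) hz) hzq
          have hsummable : Summable (fun p => gterm ω p1 p2 p z) := (core hω z hzdom).2.1
          have hsplit : DF ω p1 p2 z = gterm ω p1 p2 p₀ z + T z := by
            rw [hT]
            exact Summable.tsum_eq_add_tsum_ite hsummable p₀
          have hzqlat : z - q ∉ lattice ω := by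
            intro hc
            apply hzdom.1
            have : z - p1 = (z - q) + L ω p₀ := by rw [← hp₀]; ring
            rw [this]
            exact lat_add hc (L_mem ω p₀)
          have hzq0 : z - q ≠ 0 := sub_ne_zero.2 hzq
          have hPz1 : P (z - p1) = gV (z - q) + ((z - q) ^ 2)⁻¹ := by
            have h1 : z - p1 = (z - q) + L ω p₀ := by rw [← hp₀]; ring
            rw [h1, hper (z - q) hzqlat (L ω p₀) (L_mem ω p₀)]
            have := hgVeq (z - q) (hrρ z hz) hzq0
            rw [this]
            rw [one_div]
            ring
          have hgp₀ : gterm ω p1 p2 p₀ z = ((z - q) ^ 2)⁻¹ - ((z - p2 - L ω p₀) ^ 2)⁻¹ := by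
            have h1 : z - p1 - L ω p₀ = z - q := by rw [← hp₀]; ring
            rw [gterm, h1]
          rw [hGdef]
          show DF ω p1 p2 z - (P (z - p1) - P (z - p2)) = _
          rw [hsplit, hgp₀, hPz1]
          ring
    · -- q = p2 + L p₀
      obtain ⟨p₀, hp₀⟩ := mem_lattice_iff.1 hq1
      have hq2 : q - p1 ∉ lattice ω := by
        intro hc
        apply hp
        have : p1 - p2 = (q - p2) - (q - p1) := by ring
        rw [this]
        exact lat_sub hq1 hc
      set Fm : ℤ × ℤ → ℂ → ℂ := fun p z => if p = p₀ then 0 else gterm ω p1 p2 p z with hFm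
      have hd : ∀ p, DifferentiableOn ℂ (Fm p) (ball q (2 * r)) := by
        intro p
        by_cases hpp : p = p₀
        · simp only [hFm, hpp, if_pos]
          exact differentiableOn_const 0
        · have : Fm p = gterm ω p1 p2 p := by funext z; simp [hFm, hpp]
          rw [this]
          intro z hz
          have h2 : z - p2 - L ω p ≠ 0 := by
            intro hzero
            have hzl : z - p2 = L ω p := by linear_combination hzero
            by_cases hzq : z = q
            · apply hpp
              apply L_inj hω
              rw [← hzl, hzq, ← hp₀]
            · exact ((hiso z (hsubε hz) hzq).2) (by rw [hzl]; exact L_mem ω p)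
          have h1 : z - p1 - L ω p ≠ 0 := by
            intro hzero
            have hzl : z - p1 = L ω p := by linear_combination hzero
            by_cases hzq : z = q
            · apply hq2
              rw [hzq] at hzl
              rw [hzl]
              exact L_mem ω p
            · exact ((hiso z (hsubε hz) hzq).1) (by rw [hzl]; exact L_mem ω p)
          exact (gterm_diffAt p h1 h2).differentiableWithinAt
      obtain ⟨C, N, hC0, hN0, hCN⟩ := terms_bound ω p1 p2 hω q r
      have hC' : ∀ p : ℤ × ℤ, N ≤ ((max p.1.natAbs p.2.natAbs : ℕ) : ℝ) →
          ∀ w ∈ ball q r, ‖Fm p w‖ ≤ C * u p := by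
        intro p hpN w hw
        by_cases hpp : p = p₀
        · simp only [hFm, hpp, if_pos, norm_zero]
          exact mul_nonneg hC0 (by unfold u; positivity)
        · simp only [hFm, hpp, if_neg, ite_false]
          exact (hCN p hpN w hw).2.2.2
      have mach := machinery Fm q r hd hC'
      set T : ℂ → ℂ := fun z => ∑' p, Fm p z with hT
      refine ⟨r, hr, ?_, ?_⟩
      · intro z hz hzq
        simp only [Set.mem_compl_iff, not_not]
        exact hdom z (ball_subset_ball (by linarith) hz) hzq
      · refine ⟨fun z => T z + ((z - p1 - L ω p₀) ^ 2)⁻¹ - P (z - p1) + gV (z - q), ?_, ?_⟩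
        · apply DifferentiableOn.add
          · apply DifferentiableOn.sub
            · apply DifferentiableOn.add mach.2.1
              · intro z hz
                have hne : z - p1 - L ω p₀ ≠ 0 := by
                  intro hzero
                  have hzl : z - p1 = L ω p₀ := by linear_combination hzero
                  by_cases hzq : z = q
                  · apply hq2; rw [hzq] at hzl; rw [hzl]; exact L_mem ω p₀
                  · exact ((hiso z (hsubε1 hz) hzq).1) (by rw [hzl]; exact L_mem ω p₀)
                exact ((((differentiableAt_id.sub_const p1).sub_const (L ω p₀)).pow 2).inv
                  (pow_ne_zero 2 hne)).differentiableWithinAt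
            · apply DifferentiableOn.comp (t := {z : ℂ | z ∉ lattice ω}) hP
                ((differentiable_id.sub_const p1).differentiableOn)
              intro z hz
              show z - p1 ∉ lattice ω
              intro hc
              by_cases hzq : z = q
              · apply hq2; rw [← hzq]; exact hc
              · exact ((hiso z (hsubε1 hz) hzq).1) hc
          · apply DifferentiableOn.comp hgV ((differentiable_id.sub_const q).differentiableOn)
            intro z hz
            exact hrρ z hz
        · intro z hz hzq
          have hzdom : z ∈ latDom ω p1 p2 := hdom z (ball_subset_ball (by linarith) hz) hzq
          have hsummable : Summable (fun p => gterm ω p1 p2 p z) := (core hω z hzdom).2.1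
          have hsplit : DF ω p1 p2 z = gterm ω p1 p2 p₀ z + T z := by
            rw [hT]
            exact Summable.tsum_eq_add_tsum_ite hsummable p₀
          have hzqlat : z - q ∉ lattice ω := by
            intro hc
            apply hzdom.2
            have : z - p2 = (z - q) + L ω p₀ := by rw [← hp₀]; ring
            rw [this]
            exact lat_add hc (L_mem ω p₀)
          have hzq0 : z - q ≠ 0 := sub_ne_zero.2 hzq
          have hPz2 : P (z - p2) = gV (z - q) + ((z - q) ^ 2)⁻¹ := by
            have h1 : z - p2 = (z - q) + L ω p₀ := by rw [← hp₀]; ring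
            rw [h1, hper (z - q) hzqlat (L ω p₀) (L_mem ω p₀)]
            have := hgVeq (z - q) (hrρ z hz) hzq0
            rw [this]
            rw [one_div]
            ring
          have hgp₀ : gterm ω p1 p2 p₀ z = ((z - p1 - L ω p₀) ^ 2)⁻¹ - ((z - q) ^ 2)⁻¹ := by
            have h2 : z - p2 - L ω p₀ = z - q := by rw [← hp₀]; ring
            rw [gterm, h2]
          rw [hGdef]
          show DF ω p1 p2 z - (P (z - p1) - P (z - p2)) = _
          rw [hsplit, hgp₀, hPz2]
          ring
  -- glue to an entire function
  have hopen : IsOpen (latDom ω p1 p2)ᶜᶜ := by rw [hcompl]; exact isOpen_latDom hω p1 p2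
  have hGdiff' : DifferentiableOn ℂ G (latDom ω p1 p2)ᶜᶜ := by rw [hcompl]; exact hGdiff
  obtain ⟨Gt, hGt_diff, hGt_eq⟩ := glue hopen hGdiff' hloc
  have hGt_eq' : ∀ z ∈ latDom ω p1 p2, Gt z = G z := by
    intro z hz
    exact hGt_eq z (by simp only [Set.mem_compl_iff, not_not]; exact hz)
  -- periodicity of Gt
  have hGper1 : ∀ z ∈ latDom ω p1 p2, G (z + 1) = G z := by
    intro z hz
    have hz1 : z + 1 ∈ latDom ω p1 p2 := latDom_add (lat_one ω) hz
    rw [hGdef]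
    show DF ω p1 p2 (z+1) - (P (z + 1 - p1) - P (z + 1 - p2)) = _
    rw [DF_per1 z, show z + 1 - p1 = (z - p1) + 1 by ring, show z + 1 - p2 = (z - p2) + 1 by ring,
      hPper1 _ hz.1, hPper1 _ hz.2]
  have hGperω : ∀ z ∈ latDom ω p1 p2, G (z + ω) = G z := by
    intro z hz
    rw [hGdef]
    show DF ω p1 p2 (z+ω) - (P (z + ω - p1) - P (z + ω - p2)) = _
    rw [DF_perω z, show z + ω - p1 = (z - p1) + ω by ring, show z + ω - p2 = (z - p2) + ω by ring,
      hPperω _ hz.1, hPperω _ hz.2]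
  have hGtper1 : ∀ z, Gt (z + 1) = Gt z := by
    have hc1 : Continuous fun z => Gt (z + 1) :=
      hGt_diff.continuous.comp (continuous_id.add continuous_const)
    have := Continuous.ext_on (dense_latDom ω p1 p2) hc1 hGt_diff.continuous ?_
    · exact fun z => congrFun this z
    · intro z hz
      show Gt (z + 1) = Gt z
      rw [hGt_eq' _ (latDom_add (lat_one ω) hz), hGt_eq' _ hz]
      exact hGper1 z hz
  have hGtperω : ∀ z, Gt (z + ω) = Gt z := by
    have hc1 : Continuous fun z => Gt (z + ω) :=
      hGt_diff.continuous.comp (continuous_id.add continuous_const)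
    have := Continuous.ext_on (dense_latDom ω p1 p2) hc1 hGt_diff.continuous ?_
    · exact fun z => congrFun this z
    · intro z hz
      show Gt (z + ω) = Gt z
      rw [hGt_eq' _ (latDom_add (lat_omega ω) hz), hGt_eq' _ hz]
      exact hGperω z hz
  -- boundedness and Liouville
  have hbdd : Bornology.IsBounded (Set.range Gt) := by
    set Kf := (fun t : ℝ × ℝ => (t.1 : ℂ) + (t.2 : ℂ) * ω) '' (Icc (0:ℝ) 1 ×ˢ Icc (0:ℝ) 1) with hKf
    have hKfc : IsCompact Kf :=
      (isCompact_Icc.prod isCompact_Icc).image (by continuity)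
    have hsub : Set.range Gt ⊆ Gt '' Kf := by
      rintro y ⟨z, rfl⟩
      obtain ⟨m, n, hmn⟩ := exists_translate hω z
      refine ⟨z - ((m : ℂ) + (n : ℂ) * ω), hmn, ?_⟩
      have := per_lattice hGtper1 hGtperω (z - ((m : ℂ) + (n : ℂ) * ω)) m n
      rw [sub_add_cancel] at this
      exact this.symm
    exact ((hKfc.image hGt_diff.continuous).isBounded).subset hsub
  have hconst : ∀ z w, Gt z = Gt w := fun z w =>
    hGt_diff.apply_eq_apply_of_bounded hbdd z w
  -- parity
  have hGodd : ∀ z ∈ latDom ω p1 p2, G (p1 + p2 - z) = - G z := by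
    intro z hz
    rw [hGdef]
    show DF ω p1 p2 (p1 + p2 - z) - (P (p1 + p2 - z - p1) - P (p1 + p2 - z - p2)) = _
    rw [DF_odd z, show p1 + p2 - z - p1 = -(z - p2) by ring,
      show p1 + p2 - z - p2 = -(z - p1) by ring, heven _ hz.2, heven _ hz.1]
    ring
  -- conclude
  obtain ⟨z₀, hz₀⟩ : ∃ z₀, z₀ ∈ latDom ω p1 p2 := (dense_latDom ω p1 p2).nonempty
  have hz₀s : p1 + p2 - z₀ ∈ latDom ω p1 p2 := latDom_sub_s hz₀
  have hG0 : G z₀ = 0 := by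
    have h1 : Gt z₀ = Gt (p1 + p2 - z₀) := hconst _ _
    rw [hGt_eq' _ hz₀, hGt_eq' _ hz₀s, hGodd z₀ hz₀] at h1
    linear_combination h1 / 2
  intro z hz
  have : G z = 0 := by
    have h1 : Gt z = Gt z₀ := hconst _ _
    rw [hGt_eq' _ hz, hGt_eq' _ hz₀, hG0] at h1
    exact h1
  rw [hGdef] at this
  have h2 : DF ω p1 p2 z - (P (z - p1) - P (z - p2)) = 0 := this
  linear_combination h2


end core

end
end Stmt10

section
open Stmt10
/-- Let `P` be `Γ`-periodic holomorphic on `ℂ∖Γ` with principal part exactly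
`1/z²` at each lattice point (`P(z) − z⁻²` extends holomorphically near `0`). Then there is a
`Γ`-periodic holomorphic function `w̃` on `ℂ∖((p1+Γ) ∪ (p2+Γ))` with
`w̃′(z) = P(z−p1) − P(z−p2)`, having a simple pole of residue `−1` at `p1` and a simple pole
of residue `+1` at `p2`. -/
theorem stmt_10 (ω : ℂ) (hω : ω.im ≠ 0) (p1 p2 : ℂ) (hp : p1 - p2 ∉ lattice ω)
    (P : ℂ → ℂ)
    (hP : DifferentiableOn ℂ P {z : ℂ | z ∉ lattice ω})
    (hPper1 : ∀ z ∉ lattice ω, P (z + 1) = P z)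
    (hPperω : ∀ z ∉ lattice ω, P (z + ω) = P z)
    (hPpp : ∃ V ∈ nhds (0:ℂ), ∃ g : ℂ → ℂ, DifferentiableOn ℂ g V ∧
      ∀ z ∈ V, z ≠ 0 → g z = P z - 1 / z^2) :
    ∃ wt : ℂ → ℂ,
      DifferentiableOn ℂ wt (latDom ω p1 p2) ∧
      (∀ z ∈ latDom ω p1 p2, wt (z + 1) = wt z) ∧
      (∀ z ∈ latDom ω p1 p2, wt (z + ω) = wt z) ∧
      (∀ z ∈ latDom ω p1 p2, HasDerivAt wt (P (z - p1) - P (z - p2)) z) ∧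
      (∃ U ∈ nhds p1, ∃ g : ℂ → ℂ, DifferentiableOn ℂ g U ∧
        (∀ z ∈ U, z ≠ p1 → g z = (z - p1) * wt z) ∧ g p1 = -1) ∧
      (∃ U ∈ nhds p2, ∃ g : ℂ → ℂ, DifferentiableOn ℂ g U ∧
        (∀ z ∈ U, z ≠ p2 → g z = (z - p2) * wt z) ∧ g p2 = 1) := by
  classical
  have hp1p2 : p1 ≠ p2 := by
    intro h
    apply hp
    rw [h, sub_self]
    exact lat_zero ω
  refine ⟨wtF ω p1 p2, ?_, ?_, ?_, ?_, ?_, ?_⟩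
  · intro z hz
    exact ((core hω z hz).2.2.1).differentiableAt.differentiableWithinAt
  · intro z hz
    exact wt_per hω 1 (lat_one ω) DF_per1 z hz
  · intro z hz
    exact wt_per hω ω (lat_omega ω) DF_perω z hz
  · intro z hz
    have h := (core hω z hz).2.2.1
    rwa [DF_eq hω hp hP hPper1 hPperω hPpp z hz] at h
  · -- simple pole at p1, residue -1
    obtain ⟨ε, hε, hiso⟩ := isolate hω p1 p2 p1
    set r : ℝ := ε / 4 with hrdef
    have hr : 0 < r := by rw [hrdef]; linarith
    have hsubε : ball p1 (2 * r) ⊆ ball p1 ε := ball_subset_ball (by rw [hrdef]; linarith)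
    have hsubε1 : ball p1 r ⊆ ball p1 ε := ball_subset_ball (by rw [hrdef]; linarith)
    have hdom : ∀ z ∈ ball p1 (2 * r), z ≠ p1 → z ∈ latDom ω p1 p2 :=
      fun z hz hzq => ⟨(hiso z (hsubε hz) hzq).1, (hiso z (hsubε hz) hzq).2⟩
    set Fm : ℤ × ℤ → ℂ → ℂ := fun p z => if p = (0 : ℤ × ℤ) then 0 else fterm ω p1 p2 p z
      with hFm
    have hd : ∀ p, DifferentiableOn ℂ (Fm p) (ball p1 (2 * r)) := by
      intro p
      by_cases hpp : p = 0
      · simp only [hFm, hpp, if_pos]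
        exact differentiableOn_const 0
      · have : Fm p = fterm ω p1 p2 p := by funext z; simp [hFm, hpp]
        rw [this]
        intro z hz
        have h1 : z - p1 - L ω p ≠ 0 := by
          intro hzero
          have hzl : z - p1 = L ω p := by linear_combination hzero
          by_cases hzq : z = p1
          · apply hpp
            rw [← L_eq_zero_iff hω]
            rw [hzq, sub_self] at hzl
            exact hzl.symm
          · exact ((hiso z (hsubε hz) hzq).1) (by rw [hzl]; exact L_mem ω p)
        have h2 : z - p2 - L ω p ≠ 0 := by
          intro hzero
          have hzl : z - p2 = L ω p := by linear_combination hzero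
          by_cases hzq : z = p1
          · apply hp
            rw [hzq] at hzl
            rw [hzl]
            exact L_mem ω p
          · exact ((hiso z (hsubε hz) hzq).2) (by rw [hzl]; exact L_mem ω p)
        exact (hasDerivAt_fterm p h1 h2).differentiableAt.differentiableWithinAt
    obtain ⟨C, N, hC0, hN0, hCN⟩ := terms_bound ω p1 p2 hω p1 r
    have hC' : ∀ p : ℤ × ℤ, N ≤ ((max p.1.natAbs p.2.natAbs : ℕ) : ℝ) →
        ∀ w ∈ ball p1 r, ‖Fm p w‖ ≤ C * u p := by
      intro p hpN w hw
      by_cases hpp : p = 0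
      · simp only [hFm, hpp, if_pos, norm_zero]
        exact mul_nonneg hC0 (by unfold u; positivity)
      · simp only [hFm, hpp, if_neg, ite_false]
        exact (hCN p hpN w hw).2.2.1
    have mach := machinery Fm p1 r hd hC'
    set T : ℂ → ℂ := fun z => ∑' p, Fm p z with hT
    have hz2ne : ∀ z ∈ ball p1 r, z - p2 ≠ 0 := by
      intro z hz h0
      have hz2 : z - p2 ∈ lattice ω := by rw [h0]; exact lat_zero ω
      by_cases hzq : z = p1
      · apply hp
        rw [hzq] at hz2
        exact hz2
      · exact ((hiso z (hsubε1 hz) hzq).2) hz2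
    refine ⟨ball p1 r, isOpen_ball.mem_nhds (mem_ball_self hr),
      fun z => (z - p1) * ((z - p2)⁻¹ + T z) - 1, ?_, ?_, ?_⟩
    · apply DifferentiableOn.sub_const
      apply DifferentiableOn.mul ((differentiable_id.sub_const p1).differentiableOn)
      apply DifferentiableOn.add
      · intro z hz
        exact ((differentiableAt_id.sub_const p2).inv (hz2ne z hz)).differentiableWithinAt
      · exact mach.2.1
    · intro z hz hzq
      have hzdom : z ∈ latDom ω p1 p2 := hdom z (ball_subset_ball (by linarith) hz) hzq
      have hsum := (core hω z hzdom).1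
      have hsplit : wtF ω p1 p2 z = fterm ω p1 p2 0 z + T z := by
        rw [hT]
        exact Summable.tsum_eq_add_tsum_ite hsum 0
      have hf0 : fterm ω p1 p2 (0 : ℤ × ℤ) z = (z - p2)⁻¹ - (z - p1)⁻¹ := by
        have hL0 : L ω (0 : ℤ × ℤ) = 0 := by simp [L]
        rw [fterm, hL0]
        simp
      have hne : z - p1 ≠ 0 := sub_ne_zero.2 hzq
      have hcancel : (z - p1) * (z - p1)⁻¹ = 1 := mul_inv_cancel₀ hne
      rw [hsplit, hf0]
      linear_combination hcancel
    · simp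
  · -- simple pole at p2, residue +1
    obtain ⟨ε, hε, hiso⟩ := isolate hω p1 p2 p2
    set r : ℝ := ε / 4 with hrdef
    have hr : 0 < r := by rw [hrdef]; linarith
    have hsubε : ball p2 (2 * r) ⊆ ball p2 ε := ball_subset_ball (by rw [hrdef]; linarith)
    have hsubε1 : ball p2 r ⊆ ball p2 ε := ball_subset_ball (by rw [hrdef]; linarith)
    have hdom : ∀ z ∈ ball p2 (2 * r), z ≠ p2 → z ∈ latDom ω p1 p2 :=
      fun z hz hzq => ⟨(hiso z (hsubε hz) hzq).1, (hiso z (hsubε hz) hzq).2⟩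
    set Fm : ℤ × ℤ → ℂ → ℂ := fun p z => if p = (0 : ℤ × ℤ) then 0 else fterm ω p1 p2 p z
      with hFm
    have hd : ∀ p, DifferentiableOn ℂ (Fm p) (ball p2 (2 * r)) := by
      intro p
      by_cases hpp : p = 0
      · simp only [hFm, hpp, if_pos]
        exact differentiableOn_const 0
      · have : Fm p = fterm ω p1 p2 p := by funext z; simp [hFm, hpp]
        rw [this]
        intro z hz
        have h2 : z - p2 - L ω p ≠ 0 := by
          intro hzero
          have hzl : z - p2 = L ω p := by linear_combination hzero
          by_cases hzq : z = p2
          · apply hpp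
            rw [← L_eq_zero_iff hω]
            rw [hzq, sub_self] at hzl
            exact hzl.symm
          · exact ((hiso z (hsubε hz) hzq).2) (by rw [hzl]; exact L_mem ω p)
        have h1 : z - p1 - L ω p ≠ 0 := by
          intro hzero
          have hzl : z - p1 = L ω p := by linear_combination hzero
          by_cases hzq : z = p2
          · apply hp
            rw [hzq] at hzl
            have : p1 - p2 = - L ω p := by linear_combination -hzl
            rw [this]
            exact lat_neg (L_mem ω p)
          · exact ((hiso z (hsubε hz) hzq).1) (by rw [hzl]; exact L_mem ω p)
        exact (hasDerivAt_fterm p h1 h2).differentiableAt.differentiableWithinAt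
    obtain ⟨C, N, hC0, hN0, hCN⟩ := terms_bound ω p1 p2 hω p2 r
    have hC' : ∀ p : ℤ × ℤ, N ≤ ((max p.1.natAbs p.2.natAbs : ℕ) : ℝ) →
        ∀ w ∈ ball p2 r, ‖Fm p w‖ ≤ C * u p := by
      intro p hpN w hw
      by_cases hpp : p = 0
      · simp only [hFm, hpp, if_pos, norm_zero]
        exact mul_nonneg hC0 (by unfold u; positivity)
      · simp only [hFm, hpp, if_neg, ite_false]
        exact (hCN p hpN w hw).2.2.1
    have mach := machinery Fm p2 r hd hC'
    set T : ℂ → ℂ := fun z => ∑' p, Fm p z with hT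
    have hz1ne : ∀ z ∈ ball p2 r, z - p1 ≠ 0 := by
      intro z hz h0
      have hz1 : z - p1 ∈ lattice ω := by rw [h0]; exact lat_zero ω
      by_cases hzq : z = p2
      · apply hp
        rw [hzq] at hz1
        have : p1 - p2 = -(p2 - p1) := by ring
        rw [this]
        exact lat_neg hz1
      · exact ((hiso z (hsubε1 hz) hzq).1) hz1
    refine ⟨ball p2 r, isOpen_ball.mem_nhds (mem_ball_self hr),
      fun z => (z - p2) * (-(z - p1)⁻¹ + T z) + 1, ?_, ?_, ?_⟩
    · apply DifferentiableOn.add_const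
      apply DifferentiableOn.mul ((differentiable_id.sub_const p2).differentiableOn)
      apply DifferentiableOn.add
      · intro z hz
        exact ((differentiableAt_id.sub_const p1).inv (hz1ne z hz)).neg.differentiableWithinAt
      · exact mach.2.1
    · intro z hz hzq
      have hzdom : z ∈ latDom ω p1 p2 := hdom z (ball_subset_ball (by linarith) hz) hzq
      have hsum := (core hω z hzdom).1
      have hsplit : wtF ω p1 p2 z = fterm ω p1 p2 0 z + T z := by
        rw [hT]
        exact Summable.tsum_eq_add_tsum_ite hsum 0
      have hf0 : fterm ω p1 p2 (0 : ℤ × ℤ) z = (z - p2)⁻¹ - (z - p1)⁻¹ := by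
        have hL0 : L ω (0 : ℤ × ℤ) = 0 := by simp [L]
        rw [fterm, hL0]
        simp
      have hne : z - p2 ≠ 0 := sub_ne_zero.2 hzq
      have hcancel : (z - p2) * (z - p2)⁻¹ = 1 := mul_inv_cancel₀ hne
      rw [hsplit, hf0]
      linear_combination -hcancel
    · simp

end
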